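/- arXiv:2206.11081 — 4 statements merged into one kernel-verified Lean document; each statement's English description precedes it below -/
import Mathlib

section
/- Let S be a finite set of node types with the heterogeneous setup, let λ > 0, and let ℓ be the heterogeneous energy. Then the matrix I + λ(Q − P + D_blk) is invertible, ℓ has a unique global minimizer Y* = (Y*_s)_{s∈S}, and vec(Y*) = (I + λ(Q − P + D_blk))^{-1} vec(B), where vec(B) concatenates vec(B_s) over s ∈ S. (Lemma 3.1) -/
open Matrix Kronecker BigOperators

/-- **Heterogeneous setup.**  `S` is a finite set of node types; each `s : S` has `n s`
nodes and feature dimension `d s ≥ 1`.  For each ordered pair of node types `(s, s')`,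
`T s s'` is the (finite) set of edge types connecting them; each `t : T s s'` carries a
0/1 adjacency matrix `A t ∈ ℝ^{n s × n s'}` and a compatibility matrix
`H t ∈ ℝ^{d s × d s'}`.  The edge types are closed under inversion: `einv t : T s' s`
satisfies `einv (einv t) = t` and `A (einv t) = (A t)ᵀ`. -/
structure HeteroSetup where
  S : Type
  [fintypeS : Fintype S]
  [decEqS : DecidableEq S]
  n : S → ℕ
  d : S → ℕ
  d_pos : ∀ s, 1 ≤ d s
  T : S → S → Type
  [fintypeT : ∀ s s', Fintype (T s s')]
  A : ∀ {s s' : S}, T s s' → Matrix (Fin (n s)) (Fin (n s')) ℝ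
  H : ∀ {s s' : S}, T s s' → Matrix (Fin (d s)) (Fin (d s')) ℝ
  einv : ∀ {s s' : S}, T s s' → T s' s
  einv_einv : ∀ {s s' : S} (t : T s s'), einv (einv t) = t
  A_einv : ∀ {s s' : S} (t : T s s'), A (einv t) = (A t)ᵀ
  A_zero_one : ∀ {s s' : S} (t : T s s') (i : Fin (n s)) (j : Fin (n s')),
    A t i j = 0 ∨ A t i j = 1

attribute [instance] HeteroSetup.fintypeS HeteroSetup.decEqS HeteroSetup.fintypeT

namespace HeteroSetup

variable (hg : HeteroSetup)

/-- The space of node embeddings `Y = (Y_s)_{s ∈ S}`, `Y_s ∈ ℝ^{n_s × d_s}`. -/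
abbrev Emb := ∀ s : hg.S, Matrix (Fin (hg.n s)) (Fin (hg.d s)) ℝ

/-- The type-`t` degree matrix `D_{st}` of type-`s` nodes: the diagonal matrix of the
row sums of `A t` for `t ∈ T_{ss'}`. -/
noncomputable def Dst {s s' : hg.S} (t : hg.T s s') : Matrix (Fin (hg.n s)) (Fin (hg.n s)) ℝ :=
  Matrix.diagonal fun i => ∑ j, hg.A t i j

/-- `D_s = Σ_{s'∈S} Σ_{t∈T_{ss'}} D_{st}`. -/
noncomputable def Dtot (s : hg.S) : Matrix (Fin (hg.n s)) (Fin (hg.n s)) ℝ :=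
  ∑ s' : hg.S, ∑ t : hg.T s s', hg.Dst t

/-- The heterogeneous energy
`ℓ(Y) = Σ_s [ (1/2)‖Y_s − B_s‖_F² + (λ/2) Σ_{s'} Σ_{t ∈ T_{ss'}} Σ_{(i,j) : (A_t)_{ij} = 1}
‖(Y_s)_{i,:} H_t − (Y_{s'})_{j,:}‖² ]`.  Since the entries of `A t` are 0 or 1, the sum
over the edges `(i,j)` with `(A_t)_{ij} = 1` is written with the weight `A t i j`. -/
noncomputable def energy (lam : ℝ) (B : hg.Emb) (Y : hg.Emb) : ℝ :=
  ∑ s : hg.S,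
    ((1 / 2 : ℝ) * ∑ i, ∑ k, (Y s i k - B s i k) ^ 2 +
      lam / 2 * ∑ s' : hg.S, ∑ t : hg.T s s', ∑ i, ∑ j,
        hg.A t i j * ∑ k', ((Y s i ᵥ* hg.H t) k' - Y s' j k') ^ 2)

/-- The global index set for the stacked column-vectorization `vec(Y)`: node type `s`,
column (feature) index `k : Fin (d s)`, row (node) index `i : Fin (n s)`. -/
abbrev Idx := Σ s : hg.S, Fin (hg.d s) × Fin (hg.n s)

/-- The stacked column-vectorization `vec(Y)`, concatenating `vec(Y_s)` over `s ∈ S`: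
`vec(Y)⟨s, (k, i)⟩ = (Y_s)_{ik}`. -/
noncomputable def vecOf (Y : hg.Emb) : hg.Idx → ℝ := fun x => Y x.1 x.2.2 x.2.1

/-- The block matrix `P` with blocks `P_{ss'} = Σ_{t∈T_{ss'}} (H_t + H_{t_inv}ᵀ) ⊗ A_t`
(entrywise: the `((k,i),(k',j))` entry of the `(s,s')` block is
`(H_t + H_{t_inv}ᵀ)_{k k'} (A_t)_{i j}`). -/
noncomputable def Pmat : Matrix hg.Idx hg.Idx ℝ := fun x y =>
  ∑ t : hg.T x.1 y.1, (hg.H t + (hg.H (hg.einv t))ᵀ) x.2.1 y.2.1 * hg.A t x.2.2 y.2.2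

/-- The block-diagonal matrix `Q` with diagonal blocks
`Q_s = Σ_{s'∈S} Σ_{t∈T_{ss'}} (H_t H_tᵀ ⊗ D_{st})`. -/
noncomputable def Qmat : Matrix hg.Idx hg.Idx ℝ :=
  Matrix.blockDiagonal' fun s => ∑ s' : hg.S, ∑ t : hg.T s s',
    (hg.H t * (hg.H t)ᵀ) ⊗ₖ hg.Dst t

/-- The block-diagonal matrix `D_blk` with diagonal blocks `I_{d_s} ⊗ D_s`. -/
noncomputable def Dblk : Matrix hg.Idx hg.Idx ℝ :=
  Matrix.blockDiagonal' fun s => (1 : Matrix (Fin (hg.d s)) (Fin (hg.d s)) ℝ) ⊗ₖ hg.Dtot s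

end HeteroSetup


/-! ### Auxiliary lemmas -/

section KroneckerAux

open Finset

variable {n n' dd dd' : Type*} [Fintype n] [Fintype n'] [Fintype dd] [Fintype dd']
  [DecidableEq n] [DecidableEq dd]

private lemma sum_rot3 {α β γ : Type*} [Fintype α] [Fintype β] [Fintype γ] (f : α → β → γ → ℝ) :
    ∑ a, ∑ b, ∑ c, f a b c = ∑ c, ∑ a, ∑ b, f a b c := by
  calc ∑ a, ∑ b, ∑ c, f a b c = ∑ a, ∑ c, ∑ b, f a b c :=
        Finset.sum_congr rfl fun a _ => Finset.sum_comm
    _ = ∑ c, ∑ a, ∑ b, f a b c := Finset.sum_comm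

private lemma quad_kron_diag (X : n → dd → ℝ) (Hm : Matrix dd dd' ℝ) (c : n → ℝ) :
    ∑ p : dd × n, ∑ q : dd × n,
      X p.2 p.1 * (((Hm * Hmᵀ) ⊗ₖ Matrix.diagonal c) p q) * X q.2 q.1
    = ∑ i, c i * ∑ k' : dd', (∑ k, X i k * Hm k k') ^ 2 := by
  simp only [Fintype.sum_prod_type, kroneckerMap_apply, Matrix.diagonal_apply, mul_ite, mul_zero,
    ite_mul, zero_mul, Finset.sum_ite_eq, Finset.sum_ite_eq', Finset.mem_univ, if_true,
    Matrix.mul_apply, Matrix.transpose_apply, sq, Finset.sum_mul_sum, Finset.mul_sum,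
    Finset.sum_mul]
  rw [Finset.sum_comm]
  refine Finset.sum_congr rfl fun i _ => ?_
  rw [sum_rot3 (fun k k'' k' => X i k * (Hm k k' * Hm k'' k' * c i) * X i k'')]
  refine Finset.sum_congr rfl fun k' _ => Finset.sum_congr rfl fun k _ =>
    Finset.sum_congr rfl fun k'' _ => by ring

private lemma quad_kron_one (X : n → dd → ℝ) (c : n → ℝ) :
    ∑ p : dd × n, ∑ q : dd × n,
      X p.2 p.1 * (((1 : Matrix dd dd ℝ) ⊗ₖ Matrix.diagonal c) p q) * X q.2 q.1
    = ∑ i, c i * ∑ k, X i k ^ 2 := by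
  simp only [Fintype.sum_prod_type, kroneckerMap_apply, Matrix.diagonal_apply, Matrix.one_apply,
    mul_ite, mul_zero, ite_mul, zero_mul, Finset.sum_ite_eq, Finset.sum_ite_eq',
    Finset.mem_univ, if_true, sq, Finset.mul_sum]
  rw [Finset.sum_comm]
  exact Finset.sum_congr rfl fun i _ => Finset.sum_congr rfl fun k _ => by ring

private lemma cross_kron (X : n → dd → ℝ) (Z : n' → dd' → ℝ) (Hm : Matrix dd dd' ℝ)
    (Am : Matrix n n' ℝ) :
    ∑ p : dd × n, ∑ q : dd' × n',
      X p.2 p.1 * (Hm p.1 q.1 * Am p.2 q.2) * Z q.2 q.1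
    = ∑ i, ∑ j, Am i j * ∑ k', (∑ k, X i k * Hm k k') * Z j k' := by
  simp only [Fintype.sum_prod_type, Finset.mul_sum, Finset.sum_mul]
  rw [Finset.sum_comm]
  refine Finset.sum_congr rfl fun i _ => ?_
  rw [sum_rot3 (fun k k' j => X i k * (Hm k k' * Am i j) * Z j k')]
  refine Finset.sum_congr rfl fun j _ => ?_
  rw [Finset.sum_comm]
  exact Finset.sum_congr rfl fun k' _ => Finset.sum_congr rfl fun k _ => by ring

private lemma sum_rot_dep {α β γ : Type*} [Fintype α] [Fintype β] [Fintype γ]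
    {T : γ → Type*} [∀ c, Fintype (T c)] (f : α → β → (c : γ) → T c → ℝ) :
    ∑ a, ∑ b, ∑ c, ∑ t, f a b c t = ∑ c, ∑ t, ∑ a, ∑ b, f a b c t := by
  calc ∑ a, ∑ b, ∑ c, ∑ t, f a b c t
      = ∑ a, ∑ b, ∑ x : Σ c, T c, f a b x.1 x.2 := by
        refine Finset.sum_congr rfl fun a _ => Finset.sum_congr rfl fun b _ => ?_
        rw [← Finset.univ_sigma_univ, Finset.sum_sigma]
    _ = ∑ x : Σ c, T c, ∑ a, ∑ b, f a b x.1 x.2 := sum_rot3 _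
    _ = ∑ c, ∑ t, ∑ a, ∑ b, f a b c t := by
        rw [← Finset.univ_sigma_univ, Finset.sum_sigma]

private lemma sum_rot1_dep {α γ : Type*} [Fintype α] [Fintype γ]
    {T : γ → Type*} [∀ c, Fintype (T c)] (f : α → (c : γ) → T c → ℝ) :
    ∑ a, ∑ c, ∑ t, f a c t = ∑ c, ∑ t, ∑ a, f a c t := by
  calc ∑ a, ∑ c, ∑ t, f a c t = ∑ a, ∑ x : Σ c, T c, f a x.1 x.2 := by
        refine Finset.sum_congr rfl fun a _ => ?_
        rw [← Finset.univ_sigma_univ, Finset.sum_sigma]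
    _ = ∑ x : Σ c, T c, ∑ a, f a x.1 x.2 := Finset.sum_comm
    _ = ∑ c, ∑ t, ∑ a, f a c t := by rw [← Finset.univ_sigma_univ, Finset.sum_sigma]

end KroneckerAux

namespace HeteroSetup

variable (hg : HeteroSetup)

/-- The equivalence between edge types given by inversion. -/
def einvEquiv (s s' : hg.S) : hg.T s s' ≃ hg.T s' s :=
  ⟨hg.einv, hg.einv, hg.einv_einv, hg.einv_einv⟩

lemma sum_einv (f : ∀ s s', hg.T s s' → ℝ) :
    ∑ s, ∑ s', ∑ t : hg.T s s', f s s' t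
      = ∑ s, ∑ s', ∑ t : hg.T s s', f s' s (hg.einv t) := by
  rw [Finset.sum_comm]
  refine Finset.sum_congr rfl fun s _ => Finset.sum_congr rfl fun s' _ => ?_
  exact Fintype.sum_equiv (hg.einvEquiv s' s) _ _ fun t => by
    simp [einvEquiv, hg.einv_einv]

lemma sum_idx (f : hg.Idx → ℝ) :
    ∑ x : hg.Idx, f x = ∑ s : hg.S, ∑ p : Fin (hg.d s) × Fin (hg.n s), f ⟨s, p⟩ := by
  rw [← Finset.univ_sigma_univ, Finset.sum_sigma]

lemma dot_blockDiagonal'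
    (G : ∀ s : hg.S, Matrix (Fin (hg.d s) × Fin (hg.n s)) (Fin (hg.d s) × Fin (hg.n s)) ℝ)
    (v : hg.Idx → ℝ) :
    v ⬝ᵥ (Matrix.blockDiagonal' G *ᵥ v)
      = ∑ s, ∑ p, ∑ q, v ⟨s, p⟩ * G s p q * v ⟨s, q⟩ := by
  simp only [dotProduct, Matrix.mulVec, Finset.mul_sum]
  rw [sum_idx]
  refine Finset.sum_congr rfl fun s _ => Finset.sum_congr rfl fun p _ => ?_
  rw [sum_idx hg (fun y => v ⟨s, p⟩ * (Matrix.blockDiagonal' G ⟨s, p⟩ y * v y))]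
  rw [Finset.sum_eq_single s]
  · exact Finset.sum_congr rfl fun q _ => by rw [Matrix.blockDiagonal'_apply_eq]; ring
  · intro s' _ hs'
    refine Finset.sum_eq_zero fun q _ => ?_
    rw [Matrix.blockDiagonal'_apply_ne _ _ _ (Ne.symm hs')]
    ring
  · exact fun h => absurd (Finset.mem_univ s) h

lemma Dtot_eq (s : hg.S) :
    hg.Dtot s = Matrix.diagonal (fun i => ∑ s' : hg.S, ∑ t : hg.T s s', ∑ j, hg.A t i j) := by
  ext i j
  by_cases h : i = j <;>
    simp [Dtot, Dst, Matrix.sum_apply, Matrix.diagonal_apply, h]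

/-- The quadratic form of `Q`. -/
lemma quadQ (Y : hg.Emb) :
    hg.vecOf Y ⬝ᵥ (hg.Qmat *ᵥ hg.vecOf Y)
      = ∑ s, ∑ s', ∑ t : hg.T s s', ∑ i, ∑ j,
          hg.A t i j * ∑ k', (∑ k, Y s i k * hg.H t k k') ^ 2 := by
  rw [Qmat, dot_blockDiagonal']
  refine Finset.sum_congr rfl fun s _ => ?_
  simp only [Matrix.sum_apply, Finset.mul_sum, Finset.sum_mul, vecOf]
  rw [sum_rot_dep (fun p q (s' : hg.S) (t : hg.T s s') =>
    Y s p.2 p.1 * Matrix.kroneckerMap (fun x1 x2 => x1 * x2) (hg.H t * (hg.H t)ᵀ) (hg.Dst t) p q *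
      Y s q.2 q.1)]
  refine Finset.sum_congr rfl fun s' _ => Finset.sum_congr rfl fun t _ => ?_
  rw [Dst]; refine (quad_kron_diag (X := Y s) _ _).trans ?_
  refine Finset.sum_congr rfl fun i _ => ?_
  calc (∑ j, hg.A t i j) * ∑ k' : Fin (hg.d s'), (∑ k, Y s i k * hg.H t k k') ^ 2
      = ∑ k' : Fin (hg.d s'), (∑ j, hg.A t i j) * (∑ k, Y s i k * hg.H t k k') ^ 2 :=
        Finset.mul_sum _ _ _
    _ = ∑ k' : Fin (hg.d s'), ∑ j, hg.A t i j * (∑ k, Y s i k * hg.H t k k') ^ 2 :=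
        Finset.sum_congr rfl fun k' _ => Finset.sum_mul _ _ _
    _ = ∑ j, ∑ k' : Fin (hg.d s'), hg.A t i j * (∑ k, Y s i k * hg.H t k k') ^ 2 :=
        Finset.sum_comm

/-- The quadratic form of `D_blk`. -/
lemma quadD (Y : hg.Emb) :
    hg.vecOf Y ⬝ᵥ (hg.Dblk *ᵥ hg.vecOf Y)
      = ∑ s, ∑ s', ∑ t : hg.T s s', ∑ i, ∑ j,
          hg.A t i j * ∑ k, (Y s' j k) ^ 2 := by
  calc hg.vecOf Y ⬝ᵥ (hg.Dblk *ᵥ hg.vecOf Y)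
      = ∑ s, ∑ i, (∑ s', ∑ t : hg.T s s', ∑ j, hg.A t i j) * ∑ k, (Y s i k) ^ 2 := by
        rw [Dblk, dot_blockDiagonal']
        refine Finset.sum_congr rfl fun s _ => ?_
        simp only [vecOf]
        rw [Dtot_eq]; exact quad_kron_one (Y s) _
    _ = ∑ s, ∑ s', ∑ t : hg.T s s', ∑ i, ∑ j, hg.A t i j * ∑ k, (Y s i k) ^ 2 := by
        refine Finset.sum_congr rfl fun s _ => ?_
        simp only [Finset.sum_mul]
        exact sum_rot1_dep (fun i (s' : hg.S) (t : hg.T s s') =>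
          ∑ j, hg.A t i j * ∑ k, (Y s i k) ^ 2)
    _ = ∑ s, ∑ s', ∑ t : hg.T s s', ∑ i, ∑ j, hg.A t i j * ∑ k, (Y s' j k) ^ 2 := by
        rw [hg.sum_einv (fun s s' t => ∑ i, ∑ j, hg.A t i j * ∑ k, (Y s' j k) ^ 2)]
        refine Finset.sum_congr rfl fun s _ => Finset.sum_congr rfl fun s' _ =>
          Finset.sum_congr rfl fun t _ => ?_
        simp only [hg.A_einv, Matrix.transpose_apply]
        exact Finset.sum_comm

/-- The quadratic form of `P`. -/
lemma quadP (Y : hg.Emb) :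
    hg.vecOf Y ⬝ᵥ (hg.Pmat *ᵥ hg.vecOf Y)
      = ∑ s, ∑ s', ∑ t : hg.T s s', ∑ i, ∑ j,
          hg.A t i j * ∑ k', (2 * (∑ k, Y s i k * hg.H t k k') * Y s' j k') := by
  have h1 : hg.vecOf Y ⬝ᵥ (hg.Pmat *ᵥ hg.vecOf Y)
      = ∑ s, ∑ p, ∑ s', ∑ q, hg.vecOf Y ⟨s, p⟩ *
          (hg.Pmat ⟨s, p⟩ ⟨s', q⟩ * hg.vecOf Y ⟨s', q⟩) := by
    simp only [dotProduct, Matrix.mulVec, Finset.mul_sum]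
    rw [sum_idx]
    exact Finset.sum_congr rfl fun s _ => Finset.sum_congr rfl fun p _ => sum_idx hg _
  have h2 : ∀ (s s' : hg.S) (p : Fin (hg.d s) × Fin (hg.n s))
      (q : Fin (hg.d s') × Fin (hg.n s')),
      hg.vecOf Y ⟨s, p⟩ * (hg.Pmat ⟨s, p⟩ ⟨s', q⟩ * hg.vecOf Y ⟨s', q⟩)
      = ∑ t : hg.T s s',
          (Y s p.2 p.1 * (hg.H t p.1 q.1 * hg.A t p.2 q.2) * Y s' q.2 q.1
            + Y s p.2 p.1 * ((hg.H (hg.einv t))ᵀ p.1 q.1 * hg.A t p.2 q.2) * Y s' q.2 q.1) := by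
    intro s s' p q
    simp only [Pmat, vecOf, Finset.sum_mul, Finset.mul_sum, Matrix.add_apply,
      Matrix.transpose_apply]
    exact Finset.sum_congr rfl fun t _ => by ring
  rw [h1]
  simp only [h2, Finset.sum_add_distrib]
  have hT2 : (∑ s, ∑ s', ∑ t : hg.T s s', ∑ i, ∑ j, hg.A t i j *
        ∑ k', (∑ k, Y s i k * (hg.H (hg.einv t))ᵀ k k') * Y s' j k')
      = ∑ s, ∑ s', ∑ t : hg.T s s', ∑ i, ∑ j, hg.A t i j *
        ∑ k', (∑ k, Y s i k * hg.H t k k') * Y s' j k' := by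
    rw [hg.sum_einv (fun s s' t => ∑ i, ∑ j, hg.A t i j *
      ∑ k', (∑ k, Y s i k * (hg.H (hg.einv t))ᵀ k k') * Y s' j k')]
    refine Finset.sum_congr rfl fun s _ => Finset.sum_congr rfl fun s' _ =>
      Finset.sum_congr rfl fun t _ => ?_
    simp only [hg.A_einv, hg.einv_einv, Matrix.transpose_apply]
    refine Finset.sum_comm.trans ?_
    refine Finset.sum_congr rfl fun i _ => Finset.sum_congr rfl fun j _ => ?_
    congr 1
    simp only [Finset.sum_mul]
    exact Finset.sum_comm.trans (Finset.sum_congr rfl fun k' _ =>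
      Finset.sum_congr rfl fun k _ => by ring)
  have hX1 : (∑ s, ∑ p : Fin (hg.d s) × Fin (hg.n s), ∑ s',
        ∑ q : Fin (hg.d s') × Fin (hg.n s'), ∑ t : hg.T s s',
        Y s p.2 p.1 * (hg.H t p.1 q.1 * hg.A t p.2 q.2) * Y s' q.2 q.1)
      = ∑ s, ∑ s', ∑ t : hg.T s s', ∑ i, ∑ j, hg.A t i j *
        ∑ k', (∑ k, Y s i k * hg.H t k k') * Y s' j k' := by
    refine Finset.sum_congr rfl fun s _ => ?_
    rw [Finset.sum_comm]
    refine Finset.sum_congr rfl fun s' _ => ?_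
    rw [sum_rot3 (fun (p : Fin (hg.d s) × Fin (hg.n s))
      (q : Fin (hg.d s') × Fin (hg.n s')) (t : hg.T s s') =>
      Y s p.2 p.1 * (hg.H t p.1 q.1 * hg.A t p.2 q.2) * Y s' q.2 q.1)]
    exact Finset.sum_congr rfl fun t _ => cross_kron _ _ _ _
  have hX2 : (∑ s, ∑ p : Fin (hg.d s) × Fin (hg.n s), ∑ s',
        ∑ q : Fin (hg.d s') × Fin (hg.n s'), ∑ t : hg.T s s',
        Y s p.2 p.1 * ((hg.H (hg.einv t))ᵀ p.1 q.1 * hg.A t p.2 q.2) * Y s' q.2 q.1)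
      = ∑ s, ∑ s', ∑ t : hg.T s s', ∑ i, ∑ j, hg.A t i j *
        ∑ k', (∑ k, Y s i k * (hg.H (hg.einv t))ᵀ k k') * Y s' j k' := by
    refine Finset.sum_congr rfl fun s _ => ?_
    rw [Finset.sum_comm]
    refine Finset.sum_congr rfl fun s' _ => ?_
    rw [sum_rot3 (fun (p : Fin (hg.d s) × Fin (hg.n s))
      (q : Fin (hg.d s') × Fin (hg.n s')) (t : hg.T s s') =>
      Y s p.2 p.1 * ((hg.H (hg.einv t))ᵀ p.1 q.1 * hg.A t p.2 q.2) * Y s' q.2 q.1)]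
    exact Finset.sum_congr rfl fun t _ => cross_kron _ _ _ _
  rw [hX1, hX2, hT2]
  simp only [two_mul, add_mul, mul_add, Finset.sum_add_distrib]

/-- The energy as a quadratic form in `vec(Y)`. -/
lemma energy_eq (lam : ℝ) (B Y : hg.Emb) :
    hg.energy lam B Y
      = 1 / 2 * ((hg.vecOf Y - hg.vecOf B) ⬝ᵥ (hg.vecOf Y - hg.vecOf B))
        + lam / 2 * (hg.vecOf Y ⬝ᵥ ((hg.Qmat - hg.Pmat + hg.Dblk) *ᵥ hg.vecOf Y)) := by
  have hfro : (hg.vecOf Y - hg.vecOf B) ⬝ᵥ (hg.vecOf Y - hg.vecOf B)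
      = ∑ s, ∑ i, ∑ k, (Y s i k - B s i k) ^ 2 := by
    simp only [dotProduct, Pi.sub_apply, vecOf, ← sq]
    rw [sum_idx]
    simp only [Fintype.sum_prod_type]
    exact Finset.sum_congr rfl fun s _ => Finset.sum_comm
  have hv : hg.vecOf Y ⬝ᵥ ((hg.Qmat - hg.Pmat + hg.Dblk) *ᵥ hg.vecOf Y)
      = (∑ s, ∑ s', ∑ t : hg.T s s', ∑ i, ∑ j,
          hg.A t i j * ∑ k', (∑ k, Y s i k * hg.H t k k') ^ 2)
        - (∑ s, ∑ s', ∑ t : hg.T s s', ∑ i, ∑ j,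
          hg.A t i j * ∑ k', (2 * (∑ k, Y s i k * hg.H t k k') * Y s' j k'))
        + ∑ s, ∑ s', ∑ t : hg.T s s', ∑ i, ∑ j,
          hg.A t i j * ∑ k, (Y s' j k) ^ 2 := by
    simp only [Matrix.sub_mulVec, Matrix.add_mulVec, dotProduct_sub, dotProduct_add]
    rw [quadQ, quadP, quadD]
  have hW : (∑ s, ∑ s', ∑ t : hg.T s s', ∑ i, ∑ j,
        hg.A t i j * ∑ k', ((Y s i ᵥ* hg.H t) k' - Y s' j k') ^ 2)
      = (∑ s, ∑ s', ∑ t : hg.T s s', ∑ i, ∑ j,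
          hg.A t i j * ∑ k', (∑ k, Y s i k * hg.H t k k') ^ 2)
        - (∑ s, ∑ s', ∑ t : hg.T s s', ∑ i, ∑ j,
          hg.A t i j * ∑ k', (2 * (∑ k, Y s i k * hg.H t k k') * Y s' j k'))
        + ∑ s, ∑ s', ∑ t : hg.T s s', ∑ i, ∑ j,
          hg.A t i j * ∑ k, (Y s' j k) ^ 2 := by
    simp only [Matrix.vecMul, dotProduct, sub_sq, Finset.sum_add_distrib,
      Finset.sum_sub_distrib, mul_add, mul_sub]
  rw [energy, hv, ← hW, hfro, Finset.sum_add_distrib, ← Finset.mul_sum, ← Finset.mul_sum]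

lemma Pmat_transpose : hg.Pmatᵀ = hg.Pmat := by
  ext x y
  rcases x with ⟨sx, px⟩
  rcases y with ⟨sy, py⟩
  rw [Matrix.transpose_apply]
  simp only [Pmat]
  refine Fintype.sum_equiv (hg.einvEquiv sy sx) _ _ fun t => ?_
  simp only [einvEquiv, Equiv.coe_fn_mk, Matrix.add_apply, Matrix.transpose_apply,
    hg.einv_einv, hg.A_einv]
  ring

lemma Qmat_transpose : hg.Qmatᵀ = hg.Qmat := by
  rw [Qmat, Matrix.blockDiagonal'_transpose]
  refine congrArg Matrix.blockDiagonal' (funext fun s => ?_)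
  rw [Matrix.transpose_sum]
  refine Finset.sum_congr rfl fun s' _ => ?_
  rw [Matrix.transpose_sum]
  refine Finset.sum_congr rfl fun t _ => ?_
  rw [← Matrix.kroneckerMap_transpose]
  rw [Matrix.transpose_mul, Matrix.transpose_transpose, Dst, Matrix.diagonal_transpose]

lemma Dblk_transpose : hg.Dblkᵀ = hg.Dblk := by
  rw [Dblk, Matrix.blockDiagonal'_transpose]
  refine congrArg Matrix.blockDiagonal' (funext fun s => ?_)
  rw [← Matrix.kroneckerMap_transpose, Matrix.transpose_one, Dtot_eq,
    Matrix.diagonal_transpose, ← Dtot_eq]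

/-- Reconstructing an embedding from its vectorization. -/
noncomputable def embOf (v : hg.Idx → ℝ) : hg.Emb := fun s i k => v ⟨s, (k, i)⟩

lemma vecOf_embOf (v : hg.Idx → ℝ) : hg.vecOf (hg.embOf v) = v := rfl

lemma emb_ext {Y₁ Y₂ : hg.Emb} (h : hg.vecOf Y₁ = hg.vecOf Y₂) : Y₁ = Y₂ := by
  funext s i k
  exact congrFun h ⟨s, (k, i)⟩

lemma energy_nonneg {lam : ℝ} (hlam : 0 ≤ lam) (B Y : hg.Emb) : 0 ≤ hg.energy lam B Y := by
  refine Finset.sum_nonneg fun s _ => add_nonneg ?_ ?_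
  · exact mul_nonneg (by norm_num)
      (Finset.sum_nonneg fun i _ => Finset.sum_nonneg fun k _ => sq_nonneg _)
  · refine mul_nonneg (by linarith) ?_
    refine Finset.sum_nonneg fun s' _ => Finset.sum_nonneg fun t _ =>
      Finset.sum_nonneg fun i _ => Finset.sum_nonneg fun j _ => ?_
    refine mul_nonneg ?_ (Finset.sum_nonneg fun k' _ => sq_nonneg _)
    rcases hg.A_zero_one t i j with h | h <;> rw [h] <;> norm_num

/-- Nonnegativity of the quadratic form `Q - P + D_blk`. -/
lemma quad_nonneg (v : hg.Idx → ℝ) :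
    0 ≤ v ⬝ᵥ ((hg.Qmat - hg.Pmat + hg.Dblk) *ᵥ v) := by
  have h := hg.energy_eq 1 (hg.embOf v) (hg.embOf v)
  rw [vecOf_embOf, sub_self, zero_dotProduct] at h
  have h0 : (0 : ℝ) ≤ hg.energy 1 (hg.embOf v) (hg.embOf v) :=
    hg.energy_nonneg (by norm_num) _ _
  rw [h] at h0
  nlinarith [h0]

end HeteroSetup

open Matrix HeteroSetup

/-- **Lemma 3.1.**  In the heterogeneous setup with λ > 0, the matrix
`I + λ(Q − P + D_blk)` is invertible, the heterogeneous energy ℓ has a unique global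
minimizer `Y*`, and `vec(Y*) = (I + λ(Q − P + D_blk))⁻¹ vec(B)`. -/
theorem stmt0 (hg : HeteroSetup) (lam : ℝ) (hlam : 0 < lam) (B : hg.Emb) :
    IsUnit (1 + lam • (hg.Qmat - hg.Pmat + hg.Dblk)) ∧
    (∃! Ystar : hg.Emb, ∀ Y : hg.Emb, hg.energy lam B Ystar ≤ hg.energy lam B Y) ∧
    (∀ Ystar : hg.Emb, (∀ Y : hg.Emb, hg.energy lam B Ystar ≤ hg.energy lam B Y) →
      hg.vecOf Ystar = (1 + lam • (hg.Qmat - hg.Pmat + hg.Dblk))⁻¹ *ᵥ hg.vecOf B) := by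
  set Mm : Matrix hg.Idx hg.Idx ℝ := hg.Qmat - hg.Pmat + hg.Dblk with hMm
  set N : Matrix hg.Idx hg.Idx ℝ := 1 + lam • Mm with hN
  have hMsym : Mmᵀ = Mm := by
    rw [hMm, Matrix.transpose_add, Matrix.transpose_sub, hg.Qmat_transpose,
      hg.Pmat_transpose, hg.Dblk_transpose]
  have hNsym : Nᵀ = N := by
    rw [hN, Matrix.transpose_add, Matrix.transpose_smul, hMsym, Matrix.transpose_one]
  have hherm : N.IsHermitian := by
    rw [Matrix.IsHermitian, Matrix.conjTranspose_eq_transpose_of_trivial, hNsym]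
  have hquad : ∀ w : hg.Idx → ℝ, w ⬝ᵥ (N *ᵥ w) = w ⬝ᵥ w + lam * (w ⬝ᵥ (Mm *ᵥ w)) := by
    intro w
    rw [hN, Matrix.add_mulVec, Matrix.one_mulVec, Matrix.smul_mulVec,
      dotProduct_add, dotProduct_smul, smul_eq_mul]
  have hpd : N.PosDef := by
    refine Matrix.PosDef.of_dotProduct_mulVec_pos hherm fun x hx => ?_
    simp only [star_trivial]
    rw [hquad x]
    have h1 : 0 < x ⬝ᵥ x := by
      have := dotProduct_self_star_pos_iff (v := x)
      simp only [star_trivial] at this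
      exact this.mpr hx
    have h2 : 0 ≤ x ⬝ᵥ (Mm *ᵥ x) := hg.quad_nonneg x
    nlinarith
  have hNu : IsUnit N := hpd.isUnit
  set b : hg.Idx → ℝ := hg.vecOf B with hb
  set vstar : hg.Idx → ℝ := N⁻¹ *ᵥ b with hvstar
  have hNb : N *ᵥ vstar = b := by
    rw [hvstar, Matrix.mulVec_mulVec, Matrix.mul_nonsing_inv _
      ((Matrix.isUnit_iff_isUnit_det N).mp hNu), Matrix.one_mulVec]
  have hsym : ∀ u w : hg.Idx → ℝ, u ⬝ᵥ (N *ᵥ w) = w ⬝ᵥ (N *ᵥ u) := by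
    intro u w
    rw [Matrix.dotProduct_mulVec, ← Matrix.mulVec_transpose, hNsym, dotProduct_comm]
  -- the completed-square identity
  have hsymM : ∀ u w : hg.Idx → ℝ, u ⬝ᵥ (Mm *ᵥ w) = w ⬝ᵥ (Mm *ᵥ u) := by
    intro u w
    rw [Matrix.dotProduct_mulVec, ← Matrix.mulVec_transpose, hMsym, dotProduct_comm]
  have hNb' : vstar + lam • (Mm *ᵥ vstar) = b := by
    rw [← hNb]
    conv_rhs => rw [hN, Matrix.add_mulVec, Matrix.one_mulVec, Matrix.smul_mulVec]
  have key : ∀ Y : hg.Emb, hg.energy lam B Y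
      = 1 / 2 * ((hg.vecOf Y - vstar) ⬝ᵥ (N *ᵥ (hg.vecOf Y - vstar)))
        + hg.energy lam B (hg.embOf vstar) := by
    intro Y
    rw [hg.energy_eq lam B Y, hg.energy_eq lam B (hg.embOf vstar), hg.vecOf_embOf,
      ← hMm, ← hb]
    set v : hg.Idx → ℝ := hg.vecOf Y with hv
    have g1 : v ⬝ᵥ b = v ⬝ᵥ vstar + lam * (v ⬝ᵥ (Mm *ᵥ vstar)) := by
      rw [← hNb', dotProduct_add, dotProduct_smul, smul_eq_mul]
    have g2 : vstar ⬝ᵥ b = vstar ⬝ᵥ vstar + lam * (vstar ⬝ᵥ (Mm *ᵥ vstar)) := by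
      rw [← hNb', dotProduct_add, dotProduct_smul, smul_eq_mul]
    have h1 : v ⬝ᵥ b = b ⬝ᵥ v := dotProduct_comm _ _
    have h2 : vstar ⬝ᵥ v = v ⬝ᵥ vstar := dotProduct_comm _ _
    have h3 : b ⬝ᵥ vstar = vstar ⬝ᵥ b := dotProduct_comm _ _
    have h4 : vstar ⬝ᵥ (Mm *ᵥ v) = v ⬝ᵥ (Mm *ᵥ vstar) := hsymM _ _
    simp only [hN, Matrix.add_mulVec, Matrix.one_mulVec, Matrix.smul_mulVec,
      Matrix.mulVec_sub, dotProduct_sub, sub_dotProduct, dotProduct_add, add_dotProduct,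
      dotProduct_smul, smul_dotProduct, smul_eq_mul]
    linear_combination -g1 + g2 + (1 / 2 : ℝ) * h1 + (1 / 2 : ℝ) * h2
      + (1 / 2 : ℝ) * h3 + (lam / 2) * h4
  have hquad0 : ∀ w : hg.Idx → ℝ, 0 ≤ w ⬝ᵥ (N *ᵥ w) := by
    intro w
    rcases eq_or_ne w 0 with h | h
    · simp [h]
    · have := hpd.dotProduct_mulVec_pos h
      simpa using this.le
  have hmin : ∀ Y : hg.Emb, hg.energy lam B (hg.embOf vstar) ≤ hg.energy lam B Y := by
    intro Y
    rw [key Y]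
    nlinarith [hquad0 (hg.vecOf Y - vstar)]
  have hvec : ∀ Ystar : hg.Emb,
      (∀ Y : hg.Emb, hg.energy lam B Ystar ≤ hg.energy lam B Y) →
      hg.vecOf Ystar = N⁻¹ *ᵥ b := by
    intro Ystar hY
    have h1 : hg.energy lam B Ystar ≤ hg.energy lam B (hg.embOf vstar) := hY _
    rw [key Ystar] at h1
    have h2 : (hg.vecOf Ystar - vstar) ⬝ᵥ (N *ᵥ (hg.vecOf Ystar - vstar)) ≤ 0 := by
      nlinarith
    have h3 : hg.vecOf Ystar - vstar = 0 := by
      by_contra h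
      have := hpd.dotProduct_mulVec_pos h
      simp only [star_trivial] at this
      linarith
    have h4 : hg.vecOf Ystar = vstar := by
      have := sub_eq_zero.mp h3
      exact this
    rw [h4, hvstar]
  refine ⟨hNu, ⟨hg.embOf vstar, hmin, fun Ystar hY => ?_⟩, hvec⟩
  refine (hg.emb_ext ?_).symm
  rw [hvec Ystar hY, hg.vecOf_embOf, hvstar]
end

section
/- In the heterogeneous setup with λ > 0, for every Y = (Y_s)_{s∈S} and every s ∈ S, the gradient of the heterogeneous energy ℓ with respect to Y_s is ∇_{Y_s} ℓ(Y) = (I + λ D_s) Y_s − B_s + λ Σ_{s'∈S} Σ_{t∈T_{ss'}} ( D_{st} Y_s (H_t H_tᵀ) − A_t Y_{s'} (H_tᵀ + H_{t_inv}) ). -/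
open Matrix Kronecker BigOperators

open Matrix HeteroSetup


namespace HetAux
open Finset HeteroSetup


lemma sum_comm3 {α β γ : Type*} [Fintype α] [Fintype β] [Fintype γ]
    (f : α → β → γ → ℝ) :
    ∑ a, ∑ b, ∑ c, f a b c = ∑ c, ∑ a, ∑ b, f a b c :=
  (Finset.sum_congr rfl fun _ _ => Finset.sum_comm).trans Finset.sum_comm

lemma sum_comm3' {α β γ : Type*} [Fintype α] [Fintype β] [Fintype γ]
    (f : α → β → γ → ℝ) :
    ∑ a, ∑ b, ∑ c, f a b c = ∑ b, ∑ c, ∑ a, f a b c :=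
  Finset.sum_comm.trans (Finset.sum_congr rfl fun _ _ => Finset.sum_comm)

lemma sum_comm4dep {α : Type*} [Fintype α] {β : α → Type*} [∀ a, Fintype (β a)]
    {γ δ : Type*} [Fintype γ] [Fintype δ] (f : (a : α) → β a → γ → δ → ℝ) :
    ∑ a, ∑ b, ∑ c, ∑ d, f a b c d = ∑ c, ∑ d, ∑ a, ∑ b, f a b c d := by
  have h1 : ∀ a : α, ∑ b, ∑ c, ∑ d, f a b c d = ∑ c, ∑ d, ∑ b, f a b c d := fun a =>
    sum_comm3' fun b c d => f a b c d
  rw [Finset.sum_congr rfl fun a _ => h1 a]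
  exact Finset.sum_comm.trans (Finset.sum_congr rfl fun c _ => Finset.sum_comm)

lemma push2 {K : Type*} [Fintype K] {c : ℝ} {f : K → ℝ} (g : K → ℝ)
    (h : ∀ k, c * f k = g k) : c * ∑ k, f k = ∑ k, g k := by
  rw [Finset.mul_sum]; exact Finset.sum_congr rfl fun k _ => h k

lemma push2r {K : Type*} [Fintype K] {c : ℝ} {f : K → ℝ} (g : K → ℝ)
    (h : ∀ k, f k * c = g k) : (∑ k, f k) * c = ∑ k, g k := by
  rw [Finset.sum_mul]; exact Finset.sum_congr rfl fun k _ => h k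

lemma KL1gen {I J K K' : Type*} [Fintype I] [Fintype J] [Fintype K] [Fintype K']
    (Am : I → J → ℝ) (u : I → K' → ℝ) (y : J → K' → ℝ) (Hm : K → K' → ℝ) (v : I → K → ℝ) :
    ∑ i, ∑ j, Am i j * ∑ k', 2 * ((u i k' - y j k') * ∑ k, v i k * Hm k k') =
    2 * ∑ i, ∑ k, ((∑ j, Am i j) * ∑ k', u i k' * Hm k k'
      - ∑ j, Am i j * ∑ k', y j k' * Hm k k') * v i k := by
  have lhs_can : ∑ i, ∑ j, Am i j * ∑ k', 2 * ((u i k' - y j k') * ∑ k, v i k * Hm k k') =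
      ∑ i, ∑ k, ∑ j, ∑ k', 2 * (Am i j * ((u i k' - y j k') * (v i k * Hm k k'))) := by
    refine (Finset.sum_congr rfl fun i _ => ?_).trans
      (Finset.sum_congr rfl fun i _ => sum_comm3 _)
    refine Finset.sum_congr rfl fun j _ => ?_
    refine push2 _ fun k' => ?_
    rw [show Am i j * (2 * ((u i k' - y j k') * ∑ k, v i k * Hm k k'))
        = (2 * (Am i j * (u i k' - y j k'))) * ∑ k, v i k * Hm k k' from by ring]
    exact push2 _ fun k => by ring
  have rhs_can : 2 * ∑ i, ∑ k, ((∑ j, Am i j) * ∑ k', u i k' * Hm k k'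
        - ∑ j, Am i j * ∑ k', y j k' * Hm k k') * v i k
      = ∑ i, ∑ k, 2 * (((∑ j, Am i j) * ∑ k', u i k' * Hm k k'
        - ∑ j, Am i j * ∑ k', y j k' * Hm k k') * v i k) :=
    push2 _ fun i => push2 _ fun k => rfl
  rw [lhs_can, rhs_can]
  refine Finset.sum_congr rfl fun i _ => Finset.sum_congr rfl fun k _ => ?_
  rw [show 2 * (((∑ j, Am i j) * ∑ k', u i k' * Hm k k'
        - ∑ j, Am i j * ∑ k', y j k' * Hm k k') * v i k)
      = (∑ j, Am i j) * ((2 * v i k) * ∑ k', u i k' * Hm k k')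
        - (2 * v i k) * ∑ j, Am i j * ∑ k', y j k' * Hm k k' from by ring]
  rw [push2r (c := (2 * v i k) * ∑ k', u i k' * Hm k k')
      (fun j => Am i j * ((2 * v i k) * ∑ k', u i k' * Hm k k')) fun j => rfl,
    push2 (c := 2 * v i k) (fun j => (2 * v i k) * (Am i j * ∑ k', y j k' * Hm k k'))
      fun j => rfl, ← Finset.sum_sub_distrib]
  refine Finset.sum_congr rfl fun j _ => ?_
  rw [show Am i j * ((2 * v i k) * ∑ k', u i k' * Hm k k')
      = (2 * (Am i j * v i k)) * ∑ k', u i k' * Hm k k' from by ring,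
    show (2 * v i k) * (Am i j * ∑ k', y j k' * Hm k k')
      = (2 * (Am i j * v i k)) * ∑ k', y j k' * Hm k k' from by ring,
    push2 (c := 2 * (Am i j * v i k)) (fun k' => (2 * (Am i j * v i k)) * (u i k' * Hm k k'))
      fun k' => rfl,
    push2 (c := 2 * (Am i j * v i k)) (fun k' => (2 * (Am i j * v i k)) * (y j k' * Hm k k'))
      fun k' => rfl, ← Finset.sum_sub_distrib]
  exact Finset.sum_congr rfl fun k' _ => by ring

lemma KL2gen {I J K' : Type*} [Fintype I] [Fintype J] [Fintype K']
    (Am : I → J → ℝ) (u : I → K' → ℝ) (y : J → K' → ℝ) (w : J → K' → ℝ) :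
    ∑ i, ∑ j, Am i j * ∑ k', 2 * ((u i k' - y j k') * w j k') =
    2 * ∑ j, ∑ k', (∑ i, Am i j * u i k' - (∑ i, Am i j) * y j k') * w j k' := by
  have lhs_can : ∑ i, ∑ j, Am i j * ∑ k', 2 * ((u i k' - y j k') * w j k') =
      ∑ j, ∑ k', ∑ i, 2 * (Am i j * ((u i k' - y j k') * w j k')) := by
    refine (Finset.sum_congr rfl fun i _ => Finset.sum_congr rfl fun j _ =>
      push2 (fun k' => 2 * (Am i j * ((u i k' - y j k') * w j k'))) fun k' => by ring).trans ?_
    exact sum_comm3' fun i j k' => 2 * (Am i j * ((u i k' - y j k') * w j k'))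
  have rhs_can : 2 * ∑ j, ∑ k', (∑ i, Am i j * u i k' - (∑ i, Am i j) * y j k') * w j k'
      = ∑ j, ∑ k', 2 * ((∑ i, Am i j * u i k' - (∑ i, Am i j) * y j k') * w j k') :=
    push2 _ fun j => push2 _ fun k' => rfl
  rw [lhs_can, rhs_can]
  refine Finset.sum_congr rfl fun j _ => Finset.sum_congr rfl fun k' _ => ?_
  rw [show 2 * ((∑ i, Am i j * u i k' - (∑ i, Am i j) * y j k') * w j k')
      = (2 * w j k') * ∑ i, Am i j * u i k'
        - (∑ i, Am i j) * ((2 * w j k') * y j k') from by ring]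
  rw [push2 (c := 2 * w j k') (fun i => (2 * w j k') * (Am i j * u i k')) fun i => rfl,
    push2r (c := (2 * w j k') * y j k') (fun i => Am i j * ((2 * w j k') * y j k'))
      fun i => rfl, ← Finset.sum_sub_distrib]
  exact Finset.sum_congr rfl fun i _ => by ring


variable (hg : HeteroSetup) (lam : ℝ) (B Y : hg.Emb) (s : hg.S)

noncomputable def linPart (Yb Wp : hg.Emb) : ℝ :=
  ∑ s0 : hg.S, ((1/2 : ℝ) * ∑ i, ∑ k, 2 * ((Yb s0 i k - B s0 i k) * Wp s0 i k) +
    lam/2 * ∑ s1 : hg.S, ∑ t : hg.T s0 s1, ∑ i, ∑ j, hg.A t i j *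
      ∑ k', 2 * (((Yb s0 i ᵥ* hg.H t) k' - Yb s1 j k') * ((Wp s0 i ᵥ* hg.H t) k' - Wp s1 j k')))

noncomputable def quadPart (Wp : hg.Emb) : ℝ :=
  ∑ s0 : hg.S, ((1/2 : ℝ) * ∑ i, ∑ k, (Wp s0 i k)^2 +
    lam/2 * ∑ s1 : hg.S, ∑ t : hg.T s0 s1, ∑ i, ∑ j, hg.A t i j *
      ∑ k', ((Wp s0 i ᵥ* hg.H t) k' - Wp s1 j k')^2)

lemma energy_add (Yb Wp : hg.Emb) :
    hg.energy lam B (fun s0 => Yb s0 + Wp s0) =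
      hg.energy lam B Yb + linPart hg lam B Yb Wp + quadPart hg lam Wp := by
  unfold HeteroSetup.energy linPart quadPart
  rw [← Finset.sum_add_distrib, ← Finset.sum_add_distrib]
  refine Finset.sum_congr rfl fun s0 _ => ?_
  have hfid : ∀ (i : Fin (hg.n s0)) (k : Fin (hg.d s0)),
      ((Yb s0 + Wp s0) i k - B s0 i k) ^ 2 =
      (Yb s0 i k - B s0 i k) ^ 2 + (2 * ((Yb s0 i k - B s0 i k) * Wp s0 i k)
        + (Wp s0 i k) ^ 2) := by
    intro i k; simp only [Matrix.add_apply]; ring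
  have hrow : ∀ (s1 : hg.S) (t : hg.T s0 s1) (i : Fin (hg.n s0)),
      ((Yb s0 + Wp s0) i) ᵥ* hg.H t = Yb s0 i ᵥ* hg.H t + Wp s0 i ᵥ* hg.H t := by
    intro s1 t i
    rw [← Matrix.add_vecMul]
    rfl
  have hsm : ∀ (s1 : hg.S) (t : hg.T s0 s1) i j (k' : Fin (hg.d s1)),
      (((Yb s0 + Wp s0) i ᵥ* hg.H t) k' - (Yb s1 + Wp s1) j k') ^ 2 =
      ((Yb s0 i ᵥ* hg.H t) k' - Yb s1 j k') ^ 2 +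
      (2 * (((Yb s0 i ᵥ* hg.H t) k' - Yb s1 j k') *
            ((Wp s0 i ᵥ* hg.H t) k' - Wp s1 j k')) +
       ((Wp s0 i ᵥ* hg.H t) k' - Wp s1 j k') ^ 2) := by
    intro s1 t i j k'
    rw [hrow s1 t i]
    simp only [Matrix.add_apply, Pi.add_apply]
    ring
  simp only [hfid, hsm, Finset.sum_add_distrib, mul_add]
  ring

noncomputable def WV (V : EuclideanSpace ℝ (Fin (hg.n s) × Fin (hg.d s))) : hg.Emb :=
  Function.update (fun _ => 0) s (Matrix.of fun i k => V (i, k))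

lemma WV_ne (V : EuclideanSpace ℝ (Fin (hg.n s) × Fin (hg.d s))) {s0 : hg.S} (h : s0 ≠ s) :
    WV hg s V s0 = 0 := Function.update_of_ne h _ _

lemma WV_self (V : EuclideanSpace ℝ (Fin (hg.n s) × Fin (hg.d s))) :
    WV hg s V s = Matrix.of fun i k => V (i, k) := Function.update_self _ _ _

lemma WV_apply_self (V : EuclideanSpace ℝ (Fin (hg.n s) × Fin (hg.d s))) (i k) :
    WV hg s V s i k = V (i, k) := by rw [WV_self]; rfl

lemma WV_vecMul_self {s1 : hg.S} (t : hg.T s s1)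
    (V : EuclideanSpace ℝ (Fin (hg.n s) × Fin (hg.d s))) (i) (k') :
    (WV hg s V s i ᵥ* hg.H t) k' = ∑ k, V (i, k) * hg.H t k k' := by
  rw [WV_self]
  simp [Matrix.vecMul, dotProduct]

noncomputable def pco (s1 : hg.S) (t : hg.T s s1) (i : Fin (hg.n s)) (k : Fin (hg.d s)) : ℝ :=
  (∑ j, hg.A t i j) * ∑ k', (Y s i ᵥ* hg.H t) k' * hg.H t k k'
    - ∑ j, hg.A t i j * ∑ k', Y s1 j k' * hg.H t k k'

noncomputable def qco (s0 : hg.S) (t' : hg.T s s0) (i : Fin (hg.n s)) (k : Fin (hg.d s)) : ℝ :=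
  ∑ j, hg.A t' i j * (Y s0 j ᵥ* hg.H (hg.einv t')) k - (∑ j, hg.A t' i j) * Y s i k

noncomputable def gscal (i : Fin (hg.n s)) (k : Fin (hg.d s)) : ℝ :=
  Y s i k - B s i k + lam * (∑ s1 : hg.S, ∑ t : hg.T s s1, pco hg Y s s1 t i k)
    - lam * (∑ s0 : hg.S, ∑ t' : hg.T s s0, qco hg Y s s0 t' i k)


lemma collect {α : Type*} [Fintype α] {β : α → Type*} [∀ a, Fintype (β a)]
    {I K : Type*} [Fintype I] [Fintype K] (lam : ℝ) (c : (a : α) → β a → I → K → ℝ)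
    (v : I → K → ℝ) :
    lam/2 * (∑ a, ∑ b, 2 * ∑ i, ∑ k, c a b i k * v i k)
      = ∑ i, ∑ k, (lam * (∑ a, ∑ b, c a b i k)) * v i k := by
  calc lam/2 * (∑ a, ∑ b, 2 * ∑ i, ∑ k, c a b i k * v i k)
      = ∑ a, ∑ b, ∑ i, ∑ k, lam * (c a b i k * v i k) := by
        refine push2 _ fun a => ?_
        refine push2 _ fun b => ?_
        rw [show lam/2 * (2 * ∑ i, ∑ k, c a b i k * v i k)
            = lam * ∑ i, ∑ k, c a b i k * v i k from by ring]
        exact push2 _ fun i => push2 _ fun k => by ring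
    _ = ∑ i, ∑ k, ∑ a, ∑ b, lam * (c a b i k * v i k) := sum_comm4dep _
    _ = ∑ i, ∑ k, (lam * (∑ a, ∑ b, c a b i k)) * v i k := by
        refine Finset.sum_congr rfl fun i _ => Finset.sum_congr rfl fun k _ => ?_
        rw [show (lam * (∑ a, ∑ b, c a b i k)) * v i k
            = (lam * v i k) * ∑ a, ∑ b, c a b i k from by ring,
          push2 (g := fun a => (lam * v i k) * ∑ b, c a b i k) fun a => rfl]
        exact Finset.sum_congr rfl fun a _ => (push2 _ fun b => by ring).symm

lemma lin_eq (V : EuclideanSpace ℝ (Fin (hg.n s) × Fin (hg.d s))) :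
    linPart hg lam B Y (WV hg s V) =
      ∑ i, ∑ k, gscal hg lam B Y s i k * V (i, k) := by
  unfold linPart
  rw [Finset.sum_add_distrib]
  -- fidelity part
  have hfid : (∑ s0 : hg.S, (1/2 : ℝ) * ∑ i, ∑ k, 2 * ((Y s0 i k - B s0 i k) * WV hg s V s0 i k))
      = ∑ i, ∑ k, (Y s i k - B s i k) * V (i, k) := by
    rw [Fintype.sum_eq_single s (fun s0 h => by simp [WV_ne hg s V h])]
    simp only [WV_apply_self]
    exact push2 _ fun i => push2 _ fun k => by ring
  -- smoothness part
  have hsm : (∑ s0 : hg.S, lam/2 * ∑ s1 : hg.S, ∑ t : hg.T s0 s1, ∑ i, ∑ j, hg.A t i j *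
        ∑ k', 2 * (((Y s0 i ᵥ* hg.H t) k' - Y s1 j k') *
          ((WV hg s V s0 i ᵥ* hg.H t) k' - WV hg s V s1 j k')))
      = (∑ i, ∑ k, (lam * (∑ s1 : hg.S, ∑ t : hg.T s s1, pco hg Y s s1 t i k)) * V (i, k))
        - ∑ i, ∑ k, (lam * (∑ s0 : hg.S, ∑ t' : hg.T s s0, qco hg Y s s0 t' i k)) * V (i, k) := by
    have hX : ∀ s0 : hg.S,
        (∑ s1 : hg.S, ∑ t : hg.T s0 s1, ∑ i, ∑ j, hg.A t i j *
          ∑ k', 2 * (((Y s0 i ᵥ* hg.H t) k' - Y s1 j k') *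
            ((WV hg s V s0 i ᵥ* hg.H t) k' - WV hg s V s1 j k')))
        = (∑ s1 : hg.S, ∑ t : hg.T s0 s1, ∑ i, ∑ j, hg.A t i j *
            ∑ k', 2 * (((Y s0 i ᵥ* hg.H t) k' - Y s1 j k') * (WV hg s V s0 i ᵥ* hg.H t) k'))
          - ∑ s1 : hg.S, ∑ t : hg.T s0 s1, ∑ i, ∑ j, hg.A t i j *
            ∑ k', 2 * (((Y s0 i ᵥ* hg.H t) k' - Y s1 j k') * WV hg s V s1 j k') := by
      intro s0
      rw [← Finset.sum_sub_distrib]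
      refine Finset.sum_congr rfl fun s1 _ => ?_
      rw [← Finset.sum_sub_distrib]
      refine Finset.sum_congr rfl fun t _ => ?_
      rw [← Finset.sum_sub_distrib]
      refine Finset.sum_congr rfl fun i _ => ?_
      rw [← Finset.sum_sub_distrib]
      refine Finset.sum_congr rfl fun j _ => ?_
      rw [← mul_sub, ← Finset.sum_sub_distrib]
      exact congrArg _ (Finset.sum_congr rfl fun k' _ => by ring)
    have hP : (∑ s0 : hg.S, ∑ s1 : hg.S, ∑ t : hg.T s0 s1, ∑ i, ∑ j, hg.A t i j *
          ∑ k', 2 * (((Y s0 i ᵥ* hg.H t) k' - Y s1 j k') * (WV hg s V s0 i ᵥ* hg.H t) k'))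
        = ∑ s1 : hg.S, ∑ t : hg.T s s1, 2 * ∑ i, ∑ k, pco hg Y s s1 t i k * V (i, k) := by
      rw [Fintype.sum_eq_single s (fun s0 h => by
        simp [WV_ne hg s V h, Matrix.vecMul, dotProduct])]
      refine Finset.sum_congr rfl fun s1 _ => Finset.sum_congr rfl fun t _ => ?_
      rw [show (∑ i, ∑ j, hg.A t i j * ∑ k', 2 * (((Y s i ᵥ* hg.H t) k' - Y s1 j k') *
            (WV hg s V s i ᵥ* hg.H t) k'))
          = ∑ i, ∑ j, hg.A t i j * ∑ k', 2 * (((Y s i ᵥ* hg.H t) k' - Y s1 j k') *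
            ∑ k, V (i, k) * hg.H t k k') from
        Finset.sum_congr rfl fun i _ => Finset.sum_congr rfl fun j _ =>
          congrArg _ (Finset.sum_congr rfl fun k' _ => by rw [WV_vecMul_self])]
      simpa [pco] using KL1gen (hg.A t) (fun i k' => (Y s i ᵥ* hg.H t) k')
        (fun j k' => Y s1 j k') (fun k k' => hg.H t k k') (fun i k => V (i, k))
    have hQ : (∑ s0 : hg.S, ∑ s1 : hg.S, ∑ t : hg.T s0 s1, ∑ i, ∑ j, hg.A t i j *
          ∑ k', 2 * (((Y s0 i ᵥ* hg.H t) k' - Y s1 j k') * WV hg s V s1 j k'))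
        = ∑ s0 : hg.S, ∑ t' : hg.T s s0, 2 * ∑ i, ∑ k, qco hg Y s s0 t' i k * V (i, k) := by
      refine Finset.sum_congr rfl fun s0 _ => ?_
      rw [Fintype.sum_eq_single s (fun s1 h => by simp [WV_ne hg s V h])]
      rw [show (∑ t : hg.T s0 s, ∑ i, ∑ j, hg.A t i j * ∑ k',
            2 * (((Y s0 i ᵥ* hg.H t) k' - Y s j k') * WV hg s V s j k'))
          = ∑ t : hg.T s0 s, 2 * ∑ j, ∑ k', (∑ i, hg.A t i j * (Y s0 i ᵥ* hg.H t) k'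
              - (∑ i, hg.A t i j) * Y s j k') * V (j, k') from
        Finset.sum_congr rfl fun t _ => by
          rw [show (∑ i, ∑ j, hg.A t i j * ∑ k',
                2 * (((Y s0 i ᵥ* hg.H t) k' - Y s j k') * WV hg s V s j k'))
              = ∑ i, ∑ j, hg.A t i j * ∑ k',
                2 * (((Y s0 i ᵥ* hg.H t) k' - Y s j k') * V (j, k')) from
            Finset.sum_congr rfl fun i _ => Finset.sum_congr rfl fun j _ =>
              congrArg _ (Finset.sum_congr rfl fun k' _ => by rw [WV_apply_self])]
          exact KL2gen (hg.A t) (fun i k' => (Y s0 i ᵥ* hg.H t) k')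
            (fun j k' => Y s j k') (fun j k' => V (j, k'))]
      have hbij : Function.Bijective (hg.einv : hg.T s s0 → hg.T s0 s) :=
        Function.bijective_iff_has_inverse.mpr
          ⟨hg.einv, fun t => hg.einv_einv t, fun t => hg.einv_einv t⟩
      rw [← Fintype.sum_bijective (hg.einv : hg.T s s0 → hg.T s0 s) hbij
        (fun t' => 2 * ∑ j, ∑ k', (∑ i, hg.A (hg.einv t') i j * (Y s0 i ᵥ* hg.H (hg.einv t')) k'
          - (∑ i, hg.A (hg.einv t') i j) * Y s j k') * V (j, k')) _ (fun t' => rfl)]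
      refine Finset.sum_congr rfl fun t' _ => ?_
      simp only [hg.A_einv, Matrix.transpose_apply, qco]
    calc (∑ s0 : hg.S, lam/2 * ∑ s1 : hg.S, ∑ t : hg.T s0 s1, ∑ i, ∑ j, hg.A t i j *
          ∑ k', 2 * (((Y s0 i ᵥ* hg.H t) k' - Y s1 j k') *
            ((WV hg s V s0 i ᵥ* hg.H t) k' - WV hg s V s1 j k')))
        = ∑ s0 : hg.S, (lam/2 * (∑ s1 : hg.S, ∑ t : hg.T s0 s1, ∑ i, ∑ j, hg.A t i j *
            ∑ k', 2 * (((Y s0 i ᵥ* hg.H t) k' - Y s1 j k') * (WV hg s V s0 i ᵥ* hg.H t) k'))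
          - lam/2 * ∑ s1 : hg.S, ∑ t : hg.T s0 s1, ∑ i, ∑ j, hg.A t i j *
            ∑ k', 2 * (((Y s0 i ᵥ* hg.H t) k' - Y s1 j k') * WV hg s V s1 j k')) :=
          Finset.sum_congr rfl fun s0 _ => by rw [hX s0, mul_sub]
      _ = lam/2 * (∑ s0 : hg.S, ∑ s1 : hg.S, ∑ t : hg.T s0 s1, ∑ i, ∑ j, hg.A t i j *
            ∑ k', 2 * (((Y s0 i ᵥ* hg.H t) k' - Y s1 j k') * (WV hg s V s0 i ᵥ* hg.H t) k'))
          - lam/2 * ∑ s0 : hg.S, ∑ s1 : hg.S, ∑ t : hg.T s0 s1, ∑ i, ∑ j, hg.A t i j *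
            ∑ k', 2 * (((Y s0 i ᵥ* hg.H t) k' - Y s1 j k') * WV hg s V s1 j k') := by
          rw [Finset.sum_sub_distrib, ← Finset.mul_sum, ← Finset.mul_sum]
      _ = lam/2 * (∑ s1 : hg.S, ∑ t : hg.T s s1, 2 * ∑ i, ∑ k, pco hg Y s s1 t i k * V (i, k))
          - lam/2 * ∑ s0 : hg.S, ∑ t' : hg.T s s0,
              2 * ∑ i, ∑ k, qco hg Y s s0 t' i k * V (i, k) := by rw [hP, hQ]
      _ = _ := by rw [collect, collect]

  rw [hfid, hsm]
  rw [← Finset.sum_sub_distrib, ← Finset.sum_add_distrib]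
  refine Finset.sum_congr rfl fun i _ => ?_
  rw [← Finset.sum_sub_distrib, ← Finset.sum_add_distrib]
  refine Finset.sum_congr rfl fun k _ => ?_
  unfold gscal
  ring

section quadbound
open Finset

lemma coord_abs {P : Type*} [Fintype P] (V : EuclideanSpace ℝ P) (p : P) : |V p| ≤ ‖V‖ := by
  rw [EuclideanSpace.norm_eq, ← Real.sqrt_sq_eq_abs]
  apply Real.sqrt_le_sqrt
  have := Finset.single_le_sum (f := fun i => ‖V i‖ ^ 2) (fun i _ => by positivity)
    (Finset.mem_univ p)
  simpa [Real.norm_eq_abs, sq_abs] using this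

lemma A_nonneg {s0 s1 : hg.S} (t : hg.T s0 s1) (i j) : 0 ≤ hg.A t i j := by
  rcases hg.A_zero_one t i j with h | h <;> simp [h]

lemma quad_nonneg (hlam : 0 ≤ lam) (Wp : hg.Emb) : 0 ≤ quadPart hg lam Wp := by
  refine Finset.sum_nonneg fun s0 _ => add_nonneg ?_ ?_
  · refine mul_nonneg (by norm_num) (Finset.sum_nonneg fun i _ =>
      Finset.sum_nonneg fun k _ => sq_nonneg _)
  · refine mul_nonneg (by positivity) (Finset.sum_nonneg fun s1 _ =>
      Finset.sum_nonneg fun t _ => Finset.sum_nonneg fun i _ =>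
      Finset.sum_nonneg fun j _ => mul_nonneg (A_nonneg hg t i j)
        (Finset.sum_nonneg fun k' _ => sq_nonneg _))

lemma abs_WV_le (V : EuclideanSpace ℝ (Fin (hg.n s) × Fin (hg.d s))) (s0 : hg.S) (i) (k) :
    |WV hg s V s0 i k| ≤ ‖V‖ := by
  by_cases h : s0 = s
  · subst h; rw [WV_apply_self]; exact coord_abs V _
  · rw [WV_ne hg s V h]; simp [norm_nonneg]

lemma abs_WV_vecMul_le (V : EuclideanSpace ℝ (Fin (hg.n s) × Fin (hg.d s)))
    (s0 s1 : hg.S) (t : hg.T s0 s1) (i) (k') :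
    |(WV hg s V s0 i ᵥ* hg.H t) k'| ≤ (∑ k, |hg.H t k k'|) * ‖V‖ := by
  by_cases h : s0 = s
  · subst h
    rw [WV_vecMul_self]
    calc |∑ k, V (i, k) * hg.H t k k'| ≤ ∑ k, |V (i, k) * hg.H t k k'| :=
          Finset.abs_sum_le_sum_abs _ _
      _ ≤ ∑ k, ‖V‖ * |hg.H t k k'| := Finset.sum_le_sum fun k _ => by
          rw [abs_mul]
          exact mul_le_mul_of_nonneg_right (coord_abs V _) (abs_nonneg _)
      _ = (∑ k, |hg.H t k k'|) * ‖V‖ := by rw [← Finset.mul_sum, mul_comm]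
  · rw [WV_ne hg s V h]
    have : ((0 : Matrix (Fin (hg.n s0)) (Fin (hg.d s0)) ℝ) i ᵥ* hg.H t) k' = 0 := by
      simp [Matrix.vecMul, dotProduct]
    rw [this]
    simp only [abs_zero]
    positivity

noncomputable def Cq : ℝ :=
  ∑ s0 : hg.S, ((1/2 : ℝ) * ∑ _i : Fin (hg.n s0), ∑ _k : Fin (hg.d s0), (1 : ℝ) +
    lam/2 * ∑ s1 : hg.S, ∑ t : hg.T s0 s1, ∑ i, ∑ j, hg.A t i j *
      ∑ k' : Fin (hg.d s1), ((∑ k, |hg.H t k k'|) + 1)^2)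

lemma quad_le (hlam : 0 ≤ lam) (V : EuclideanSpace ℝ (Fin (hg.n s) × Fin (hg.d s))) :
    quadPart hg lam (WV hg s V) ≤ Cq hg lam * ‖V‖^2 := by
  have hC : Cq hg lam * ‖V‖^2
      = ∑ s0 : hg.S, ((1/2 : ℝ) * ∑ _i : Fin (hg.n s0), ∑ _k : Fin (hg.d s0), ‖V‖^2 +
        lam/2 * ∑ s1 : hg.S, ∑ t : hg.T s0 s1, ∑ i, ∑ j, hg.A t i j *
          ∑ k' : Fin (hg.d s1), ((∑ k, |hg.H t k k'|) + 1)^2 * ‖V‖^2) := by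
    unfold Cq
    rw [Finset.sum_mul]
    refine Finset.sum_congr rfl fun s0 _ => ?_
    rw [add_mul]
    congr 1
    · rw [mul_assoc]
      congr 1
      rw [Finset.sum_mul]
      refine Finset.sum_congr rfl fun i _ => ?_
      rw [Finset.sum_mul]
      exact Finset.sum_congr rfl fun k _ => one_mul _
    · rw [mul_assoc]
      congr 1
      rw [Finset.sum_mul]
      refine Finset.sum_congr rfl fun s1 _ => ?_
      rw [Finset.sum_mul]
      refine Finset.sum_congr rfl fun t _ => ?_
      rw [Finset.sum_mul]
      refine Finset.sum_congr rfl fun i _ => ?_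
      rw [Finset.sum_mul]
      refine Finset.sum_congr rfl fun j _ => ?_
      rw [mul_assoc]
      congr 1
      rw [Finset.sum_mul]
  rw [hC]
  unfold quadPart
  refine Finset.sum_le_sum fun s0 _ => ?_
  refine add_le_add (mul_le_mul_of_nonneg_left ?_ (by norm_num))
    (mul_le_mul_of_nonneg_left ?_ (by positivity))
  · refine Finset.sum_le_sum fun i _ => Finset.sum_le_sum fun k _ => ?_
    calc (WV hg s V s0 i k)^2 = |WV hg s V s0 i k|^2 := (sq_abs _).symm
      _ ≤ ‖V‖^2 := pow_le_pow_left₀ (abs_nonneg _) (abs_WV_le hg s V s0 i k) 2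
  · refine Finset.sum_le_sum fun s1 _ => Finset.sum_le_sum fun t _ => ?_
    refine Finset.sum_le_sum fun i _ => Finset.sum_le_sum fun j _ => ?_
    refine mul_le_mul_of_nonneg_left (Finset.sum_le_sum fun k' _ => ?_) (A_nonneg hg t i j)
    calc ((WV hg s V s0 i ᵥ* hg.H t) k' - WV hg s V s1 j k')^2
        = |(WV hg s V s0 i ᵥ* hg.H t) k' - WV hg s V s1 j k'|^2 := (sq_abs _).symm
      _ ≤ (((∑ k, |hg.H t k k'|) + 1) * ‖V‖)^2 := by
        refine pow_le_pow_left₀ (abs_nonneg _) ?_ 2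
        calc |(WV hg s V s0 i ᵥ* hg.H t) k' - WV hg s V s1 j k'|
            ≤ |(WV hg s V s0 i ᵥ* hg.H t) k'| + |WV hg s V s1 j k'| := abs_sub _ _
          _ ≤ (∑ k, |hg.H t k k'|) * ‖V‖ + 1 * ‖V‖ := by
              refine add_le_add (abs_WV_vecMul_le hg s V s0 s1 t i k') ?_
              rw [one_mul]; exact abs_WV_le hg s V s1 j k'
          _ = ((∑ k, |hg.H t k k'|) + 1) * ‖V‖ := by ring
      _ = ((∑ k, |hg.H t k k'|) + 1)^2 * ‖V‖^2 := by rw [mul_pow]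

end quadbound

section gentry
open Finset

noncomputable def Gmat : Matrix (Fin (hg.n s)) (Fin (hg.d s)) ℝ :=
  (1 + lam • hg.Dtot s) * Y s - B s +
    lam • ∑ s' : hg.S, ∑ t : hg.T s s',
      (hg.Dst t * Y s * (hg.H t * (hg.H t)ᵀ) -
        hg.A t * Y s' * ((hg.H t)ᵀ + hg.H (hg.einv t)))

lemma GEntry (i : Fin (hg.n s)) (k : Fin (hg.d s)) :
    Gmat hg lam B Y s i k = gscal hg lam B Y s i k := by
  unfold Gmat
  have h1 : (((1 + lam • hg.Dtot s) * Y s : Matrix (Fin (hg.n s)) (Fin (hg.d s)) ℝ)) i k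
      = Y s i k + lam * ∑ s1 : hg.S, ∑ t : hg.T s s1, (∑ j, hg.A t i j) * Y s i k := by
    rw [Matrix.add_mul, Matrix.one_mul, Matrix.add_apply, Matrix.smul_mul, Matrix.smul_apply,
      smul_eq_mul]
    congr 1
    unfold HeteroSetup.Dtot
    rw [Matrix.sum_mul, Matrix.sum_apply]
    refine congrArg _ (Finset.sum_congr rfl fun s1 _ => ?_)
    rw [Matrix.sum_mul, Matrix.sum_apply]
    refine Finset.sum_congr rfl fun t _ => ?_
    unfold HeteroSetup.Dst
    rw [Matrix.diagonal_mul]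
  have h2 : ∀ (s1 : hg.S) (t : hg.T s s1),
      (hg.Dst t * Y s * (hg.H t * (hg.H t)ᵀ)) i k
        = (∑ j, hg.A t i j) * ∑ k', (Y s i ᵥ* hg.H t) k' * hg.H t k k' := by
    intro s1 t
    rw [Matrix.mul_assoc]
    unfold HeteroSetup.Dst
    rw [Matrix.diagonal_mul]
    congr 1
    rw [Matrix.mul_apply]
    calc ∑ m, Y s i m * (hg.H t * (hg.H t)ᵀ) m k
        = ∑ m, ∑ k', Y s i m * (hg.H t m k' * hg.H t k k') := by
          refine Finset.sum_congr rfl fun m _ => ?_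
          rw [Matrix.mul_apply]
          refine push2 _ fun k' => ?_
          rw [Matrix.transpose_apply]
      _ = ∑ k', ∑ m, Y s i m * (hg.H t m k' * hg.H t k k') := Finset.sum_comm
      _ = ∑ k', (Y s i ᵥ* hg.H t) k' * hg.H t k k' := by
          refine Finset.sum_congr rfl fun k' _ => ?_
          rw [show (Y s i ᵥ* hg.H t) k' = ∑ m, Y s i m * hg.H t m k' from by
            simp [Matrix.vecMul, dotProduct]]
          rw [Finset.sum_mul]
          exact Finset.sum_congr rfl fun m _ => by ring
  have h3 : ∀ (s1 : hg.S) (t : hg.T s s1),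
      (hg.A t * Y s1 * ((hg.H t)ᵀ + hg.H (hg.einv t))) i k
        = (∑ j, hg.A t i j * ∑ k', Y s1 j k' * hg.H t k k')
          + ∑ j, hg.A t i j * (Y s1 j ᵥ* hg.H (hg.einv t)) k := by
    intro s1 t
    rw [Matrix.mul_add, Matrix.add_apply]
    congr 1
    · rw [Matrix.mul_assoc, Matrix.mul_apply]
      refine Finset.sum_congr rfl fun j _ => ?_
      rw [Matrix.mul_apply]
      simp [Matrix.transpose_apply]
    · rw [Matrix.mul_assoc, Matrix.mul_apply]
      refine Finset.sum_congr rfl fun j _ => ?_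
      rw [Matrix.mul_apply]
      simp [Matrix.vecMul, dotProduct]
  rw [Matrix.add_apply, Matrix.sub_apply, Matrix.smul_apply, smul_eq_mul, h1]
  have h4 : (∑ s' : hg.S, ∑ t : hg.T s s',
        (hg.Dst t * Y s * (hg.H t * (hg.H t)ᵀ) -
          hg.A t * Y s' * ((hg.H t)ᵀ + hg.H (hg.einv t)))) i k
      = ∑ s1 : hg.S, ∑ t : hg.T s s1,
          (pco hg Y s s1 t i k - qco hg Y s s1 t i k - (∑ j, hg.A t i j) * Y s i k) := by
    rw [Matrix.sum_apply]
    refine Finset.sum_congr rfl fun s1 _ => ?_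
    rw [Matrix.sum_apply]
    refine Finset.sum_congr rfl fun t _ => ?_
    rw [Matrix.sub_apply, h2 s1 t, h3 s1 t]
    unfold pco qco
    ring
  rw [h4]
  have h5 : ∑ s1 : hg.S, ∑ t : hg.T s s1,
        (pco hg Y s s1 t i k - qco hg Y s s1 t i k - (∑ j, hg.A t i j) * Y s i k)
      = (∑ s1 : hg.S, ∑ t : hg.T s s1, pco hg Y s s1 t i k)
        - (∑ s1 : hg.S, ∑ t : hg.T s s1, qco hg Y s s1 t i k)
        - ∑ s1 : hg.S, ∑ t : hg.T s s1, (∑ j, hg.A t i j) * Y s i k := by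
    rw [← Finset.sum_sub_distrib, ← Finset.sum_sub_distrib]
    refine Finset.sum_congr rfl fun s1 _ => ?_
    rw [← Finset.sum_sub_distrib, ← Finset.sum_sub_distrib]
  rw [h5]
  unfold gscal
  ring

end gentry

section analysis
open Asymptotics

lemma hasGradientAt_of_sq_bound {E : Type*} [NormedAddCommGroup E] [InnerProductSpace ℝ E]
    [CompleteSpace E] (f : E → ℝ) (g x : E) (C : ℝ)
    (h : ∀ V : E, |f (x + V) - f x - (inner ℝ g V : ℝ)| ≤ C * ‖V‖ ^ 2) :
    HasGradientAt f g x := by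
  rw [hasGradientAt_iff_isLittleO_nhds_zero]
  have hO : (fun V => f (x + V) - f x - (inner ℝ g V : ℝ)) =O[nhds 0] fun V : E => ‖V‖ ^ 2 := by
    refine IsBigO.of_bound C (Filter.Eventually.of_forall fun V => ?_)
    simpa [abs_of_nonneg (sq_nonneg ‖V‖)] using h V
  exact hO.trans_isLittleO (isLittleO_norm_pow_id one_lt_two)

end analysis

end HetAux
/-- In the heterogeneous setup with λ > 0, for every `Y = (Y_s)` and
every node type `s`, the gradient of the heterogeneous energy ℓ with respect to `Y_s` is
`∇_{Y_s} ℓ(Y) = (I + λ D_s) Y_s − B_s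
  + λ Σ_{s'∈S} Σ_{t∈T_{ss'}} ( D_{st} Y_s (H_t H_tᵀ) − A_t Y_{s'} (H_tᵀ + H_{t_inv}) )`.
The gradient statement is expressed via `HasGradientAt` on the Euclidean (Frobenius
inner product) space of matrices `ℝ^{n_s × d_s} ≃ EuclideanSpace ℝ (Fin n_s × Fin d_s)`,
for the function `Z ↦ ℓ(Y with its s-component replaced by Z)`. -/
theorem stmt1 (hg : HeteroSetup) (lam : ℝ) (hlam : 0 < lam) (B : hg.Emb)
    (Y : hg.Emb) (s : hg.S) :
    HasGradientAt
      (fun Z : EuclideanSpace ℝ (Fin (hg.n s) × Fin (hg.d s)) =>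
        hg.energy lam B (Function.update Y s (Matrix.of fun i k => Z (i, k))))
      ((WithLp.equiv 2 _).symm fun p : Fin (hg.n s) × Fin (hg.d s) =>
        (((1 + lam • hg.Dtot s) * Y s - B s +
          lam • ∑ s' : hg.S, ∑ t : hg.T s s',
            (hg.Dst t * Y s * (hg.H t * (hg.H t)ᵀ) -
              hg.A t * Y s' * ((hg.H t)ᵀ + hg.H (hg.einv t))) :
          Matrix (Fin (hg.n s)) (Fin (hg.d s)) ℝ) p.1 p.2))
      ((WithLp.equiv 2 _).symm fun p : Fin (hg.n s) × Fin (hg.d s) => Y s p.1 p.2) := by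
  classical
  set x : EuclideanSpace ℝ (Fin (hg.n s) × Fin (hg.d s)) :=
    (WithLp.equiv 2 _).symm fun p : Fin (hg.n s) × Fin (hg.d s) => Y s p.1 p.2 with hxdef
  refine HetAux.hasGradientAt_of_sq_bound _ _ _ (HetAux.Cq hg lam) fun V => ?_
  have hxapp : ∀ p : Fin (hg.n s) × Fin (hg.d s), x p = Y s p.1 p.2 := fun p => rfl
  have hupd : Function.update Y s (Matrix.of fun i k => (x + V) (i, k))
      = fun s0 => Y s0 + HetAux.WV hg s V s0 := by
    funext s0
    by_cases h : s0 = s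
    · subst h
      rw [Function.update_self]
      ext i k
      have h1 : (Matrix.of fun i k => (x + V) (i, k)) i k = x (i, k) + V (i, k) := by
        simp [PiLp.add_apply]
      rw [h1, hxapp (i, k), Matrix.add_apply, HetAux.WV_apply_self]
    · rw [Function.update_of_ne h, HetAux.WV_ne hg s V h, add_zero]
  have hx : Function.update Y s (Matrix.of fun i k => x (i, k)) = Y := by
    have : (Matrix.of fun i k => x (i, k)) = Y s := by
      ext i k
      exact hxapp (i, k)
    rw [this, Function.update_eq_self]
  have hfxV : hg.energy lam B (Function.update Y s (Matrix.of fun i k => (x + V) (i, k)))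
      = hg.energy lam B Y + HetAux.linPart hg lam B Y (HetAux.WV hg s V)
        + HetAux.quadPart hg lam (HetAux.WV hg s V) := by
    rw [hupd, HetAux.energy_add]
  have hfx : hg.energy lam B (Function.update Y s (Matrix.of fun i k => x (i, k)))
      = hg.energy lam B Y := by rw [hx]
  have hinner : (inner ℝ ((WithLp.equiv 2 _).symm fun p : Fin (hg.n s) × Fin (hg.d s) =>
      (((1 + lam • hg.Dtot s) * Y s - B s +
          lam • ∑ s' : hg.S, ∑ t : hg.T s s',
            (hg.Dst t * Y s * (hg.H t * (hg.H t)ᵀ) -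
              hg.A t * Y s' * ((hg.H t)ᵀ + hg.H (hg.einv t))) :
          Matrix (Fin (hg.n s)) (Fin (hg.d s)) ℝ) p.1 p.2)) V : ℝ)
      = HetAux.linPart hg lam B Y (HetAux.WV hg s V) := by
    rw [HetAux.lin_eq hg lam B Y s V]
    rw [show (inner ℝ ((WithLp.equiv 2 _).symm fun p : Fin (hg.n s) × Fin (hg.d s) =>
        (((1 + lam • hg.Dtot s) * Y s - B s +
            lam • ∑ s' : hg.S, ∑ t : hg.T s s',
              (hg.Dst t * Y s * (hg.H t * (hg.H t)ᵀ) -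
                hg.A t * Y s' * ((hg.H t)ᵀ + hg.H (hg.einv t))) :
            Matrix (Fin (hg.n s)) (Fin (hg.d s)) ℝ) p.1 p.2)) V : ℝ)
        = ∑ p : Fin (hg.n s) × Fin (hg.d s), HetAux.Gmat hg lam B Y s p.1 p.2 * V p from by
      rw [PiLp.inner_apply]
      exact Finset.sum_congr rfl fun p _ => by
        simp [RCLike.inner_apply, conj_trivial, HetAux.Gmat, mul_comm]]
    rw [Fintype.sum_prod_type]
    exact Finset.sum_congr rfl fun i _ => Finset.sum_congr rfl fun k _ => by
      rw [HetAux.GEntry hg lam B Y s i k]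
  simp only
  rw [hfxV, hfx, hinner]
  have hq : hg.energy lam B Y + HetAux.linPart hg lam B Y (HetAux.WV hg s V)
      + HetAux.quadPart hg lam (HetAux.WV hg s V) - hg.energy lam B Y
      - HetAux.linPart hg lam B Y (HetAux.WV hg s V)
      = HetAux.quadPart hg lam (HetAux.WV hg s V) := by ring
  rw [hq, abs_of_nonneg (HetAux.quad_nonneg hg lam hlam.le _)]
  exact HetAux.quad_le hg lam s hlam.le V
end

section
/- In the heterogeneous setup with λ > 0, the stacked vectorized gradient of the heterogeneous energy satisfies, for every Y, vec(∇ℓ(Y)) = vec(Y) − vec(B) + λ (Q − P + D_blk) vec(Y), where vec(∇ℓ(Y)) concatenates vec(∇_{Y_s} ℓ(Y)) over s ∈ S and vec(B) concatenates vec(B_s) over s ∈ S. -/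
open Matrix Kronecker BigOperators

variable {ι : Type} [Fintype ι] [DecidableEq ι]

lemma toDual_eq_sum_proj (g : ι → ℝ) :
    (InnerProductSpace.toDual ℝ (EuclideanSpace ℝ ι)) ((WithLp.equiv 2 _).symm g)
      = ∑ x, g x • (PiLp.proj 2 (fun _ : ι => ℝ) x : EuclideanSpace ℝ ι →L[ℝ] ℝ) := by
  ext u
  simp [InnerProductSpace.toDual_apply_apply, PiLp.inner_apply, RCLike.inner_apply,
    ContinuousLinearMap.sum_apply, PiLp.proj_apply, mul_comm]

lemma quad_grad (c : ℝ) (b v : ι → ℝ) (M : Matrix ι ι ℝ) (hM : ∀ x y, M x y = M y x) :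
    HasGradientAt
      (fun w : EuclideanSpace ℝ ι =>
        (1 / 2 : ℝ) * ∑ x, (w x - b x) ^ 2 + c / 2 * ∑ x, ∑ y, M x y * w x * w y)
      ((WithLp.equiv 2 _).symm (v - b + c • (M *ᵥ v)))
      ((WithLp.equiv 2 _).symm v) := by
  rw [hasGradientAt_iff_hasFDerivAt]
  set v₀ : EuclideanSpace ℝ ι := (WithLp.equiv 2 _).symm v with hv₀
  have hproj : ∀ x : ι, HasFDerivAt (fun w : EuclideanSpace ℝ ι => w x)
      (PiLp.proj 2 (fun _ : ι => ℝ) x : EuclideanSpace ℝ ι →L[ℝ] ℝ) v₀ := fun x => by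
    have := (PiLp.proj (𝕜 := ℝ) 2 (fun _ : ι => ℝ) x).hasFDerivAt (x := v₀)
    simpa [PiLp.proj_apply] using this
  have h1 : HasFDerivAt (fun w : EuclideanSpace ℝ ι => (1 / 2 : ℝ) * ∑ x, (w x - b x) ^ 2)
      ((1/2 : ℝ) • ∑ x : ι, ((2 : ℝ) * (v₀ x - b x)) • (PiLp.proj 2 (fun _ : ι => ℝ) x : EuclideanSpace ℝ ι →L[ℝ] ℝ)) v₀ := by
    refine HasFDerivAt.const_mul (HasFDerivAt.fun_sum fun x _ => ?_) _
    have h := ((hproj x).sub_const (b x)).mul ((hproj x).sub_const (b x))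
    have hfun : (fun w : EuclideanSpace ℝ ι => (w x - b x) ^ 2)
        = fun w : EuclideanSpace ℝ ι => (w x - b x) * (w x - b x) := by
      funext w; ring
    rw [hfun]
    refine h.congr_fderiv (Eq.symm ?_)
    rw [two_mul, add_smul]
  have h2 : HasFDerivAt (fun w : EuclideanSpace ℝ ι => c / 2 * ∑ x, ∑ y, M x y * w x * w y)
      ((c/2 : ℝ) • ∑ x : ι, ∑ y : ι,
        (M x y • (v₀ x • (PiLp.proj 2 (fun _ : ι => ℝ) y : EuclideanSpace ℝ ι →L[ℝ] ℝ)
          + v₀ y • (PiLp.proj 2 (fun _ : ι => ℝ) x : EuclideanSpace ℝ ι →L[ℝ] ℝ)))) v₀ := by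
    refine HasFDerivAt.const_mul (HasFDerivAt.fun_sum fun x _ => HasFDerivAt.fun_sum fun y _ => ?_) _
    have := (((hproj x).mul (hproj y)).const_mul (M x y))
    have hf : (fun w : EuclideanSpace ℝ ι => M x y * w x * w y)
        = fun w : EuclideanSpace ℝ ι => M x y * (w x * w y) := by
      funext w; ring
    rw [hf]
    exact this
  have h := h1.add h2
  refine h.congr_fderiv (Eq.symm ?_)
  rw [toDual_eq_sum_proj]
  ext u
  simp only [ContinuousLinearMap.add_apply, ContinuousLinearMap.smul_apply,
    ContinuousLinearMap.sum_apply, PiLp.proj_apply, smul_eq_mul,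
    Pi.add_apply, Pi.sub_apply, Pi.smul_apply]
  have hv : ∀ x, v₀ x = v x := fun x => rfl
  simp only [hv]
  have hmv : ∀ x, (M *ᵥ v) x = ∑ y, M x y * v y := fun x => by
    simp [Matrix.mulVec, dotProduct]
  have hAB : ∑ i : ι, ∑ x : ι, M i x * (v i * u x) = ∑ i : ι, ∑ x : ι, M i x * (v x * u i) := by
    rw [Finset.sum_comm]
    exact Finset.sum_congr rfl fun i _ => Finset.sum_congr rfl fun x _ => by rw [hM x i]
  calc ∑ x : ι, (v x - b x + c * (M *ᵥ v) x) * u x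
      = (∑ x : ι, (v x - b x) * u x) + c * ∑ x : ι, ∑ y : ι, M x y * (v y * u x) := by
        rw [Finset.mul_sum, ← Finset.sum_add_distrib]
        refine Finset.sum_congr rfl fun x _ => ?_
        have hx : (∑ y : ι, M x y * v y) * u x = ∑ y : ι, M x y * (v y * u x) := by
          rw [Finset.sum_mul]
          exact Finset.sum_congr rfl fun y _ => by ring
        rw [hmv x, add_mul, mul_assoc, hx]
    _ = 1 / 2 * ∑ x : ι, 2 * (v x - b x) * u x
        + c / 2 * ∑ x : ι, ∑ y : ι, M x y * (v x * u y + v y * u x) := by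
        congr 1
        · rw [Finset.mul_sum]
          exact Finset.sum_congr rfl fun x _ => by ring
        · have hsplit : ∀ x : ι, ∑ y : ι, M x y * (v x * u y + v y * u x)
              = (∑ y : ι, M x y * (v x * u y)) + ∑ y : ι, M x y * (v y * u x) := by
            intro x
            rw [← Finset.sum_add_distrib]
            exact Finset.sum_congr rfl fun y _ => by ring
          simp only [hsplit]
          rw [Finset.sum_add_distrib, hAB]
          ring


section Helpers

variable {S : Type} [Fintype S] [DecidableEq S] {m : S → Type} [∀ s, Fintype (m s)]

lemma sum_sigma_fintype (f : (Σ s, m s) → ℝ) :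
    ∑ x : Σ s, m s, f x = ∑ s : S, ∑ p : m s, f ⟨s, p⟩ := by
  rw [← Finset.univ_sigma_univ, Finset.sum_sigma]

lemma sum_bd (f : ∀ s, Matrix (m s) (m s) ℝ) (w : (Σ s, m s) → ℝ) :
    ∑ x : Σ s, m s, ∑ y : Σ s, m s, Matrix.blockDiagonal' f x y * w x * w y
      = ∑ s : S, ∑ p : m s, ∑ q : m s, f s p q * w ⟨s, p⟩ * w ⟨s, q⟩ := by
  rw [sum_sigma_fintype]
  refine Finset.sum_congr rfl fun s _ => Finset.sum_congr rfl fun p _ => ?_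
  rw [sum_sigma_fintype (f := fun y => Matrix.blockDiagonal' f ⟨s, p⟩ y * w ⟨s, p⟩ * w y)]
  rw [Finset.sum_eq_single s]
  · exact Finset.sum_congr rfl fun q _ => by rw [Matrix.blockDiagonal'_apply_eq]
  · intro s₂ _ h
    refine Finset.sum_eq_zero fun q _ => ?_
    rw [Matrix.blockDiagonal'_apply_ne _ _ _ (Ne.symm h), zero_mul, zero_mul]
  · exact fun h => absurd (Finset.mem_univ s) h

lemma bd_symm (f : ∀ s, Matrix (m s) (m s) ℝ) (hf : ∀ s p q, f s p q = f s q p)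
    (x y : Σ s, m s) : Matrix.blockDiagonal' f x y = Matrix.blockDiagonal' f y x := by
  rcases x with ⟨s, p⟩; rcases y with ⟨s₂, q⟩
  by_cases h : s = s₂
  · subst h; rw [Matrix.blockDiagonal'_apply_eq, Matrix.blockDiagonal'_apply_eq, hf]
  · rw [Matrix.blockDiagonal'_apply_ne _ _ _ h, Matrix.blockDiagonal'_apply_ne _ _ _ (Ne.symm h)]

lemma diag_symm {ι : Type} [DecidableEq ι] (d : ι → ℝ) (i j : ι) :
    Matrix.diagonal d i j = Matrix.diagonal d j i := by
  by_cases h : i = j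
  · subst h; rfl
  · rw [Matrix.diagonal_apply_ne _ h, Matrix.diagonal_apply_ne _ (Ne.symm h)]

end Helpers

section Generic

set_option linter.unusedSectionVars false

lemma sum_comm3 {α β γ : Type} [Fintype α] [Fintype β] [Fintype γ] (f : α → β → γ → ℝ) :
    ∑ a : α, ∑ b : β, ∑ c : γ, f a b c = ∑ c : γ, ∑ a : α, ∑ b : β, f a b c :=
  (Finset.sum_congr rfl fun _ _ => Finset.sum_comm).trans Finset.sum_comm

lemma sum_mul_out {α β γ : Type} [Fintype α] [Fintype β] [Fintype γ]
    (e : α → β → γ → ℝ) (a : α → ℝ) (b : β → ℝ) :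
    ∑ p : α, ∑ q : β, (∑ c : γ, e p q c) * a p * b q
      = ∑ c : γ, ∑ p : α, ∑ q : β, e p q c * a p * b q := by
  simp only [Finset.sum_mul]
  exact sum_comm3 _

variable {n n' d d' : ℕ}

lemma kronQ (A : Matrix (Fin n) (Fin n') ℝ) (H : Matrix (Fin d) (Fin d') ℝ)
    (ω : Fin d × Fin n → ℝ) :
    ∑ p : Fin d × Fin n, ∑ q : Fin d × Fin n,
        (H * Hᵀ) p.1 q.1 * Matrix.diagonal (fun i => ∑ j, A i j) p.2 q.2 * ω p * ω q
      = ∑ i, (∑ j, A i j) * ∑ k', (∑ k, ω (k, i) * H k k') ^ 2 := by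
  rw [Fintype.sum_prod_type]
  have lhs1 : ∀ (k : Fin d) (i : Fin n),
      ∑ q : Fin d × Fin n,
          (H * Hᵀ) k q.1 * Matrix.diagonal (fun i => ∑ j, A i j) i q.2 * ω (k, i) * ω q
        = ∑ k2 : Fin d, (H * Hᵀ) k k2 * (∑ j, A i j) * ω (k, i) * ω (k2, i) := by
    intro k i
    rw [Fintype.sum_prod_type]
    refine Finset.sum_congr rfl fun k2 _ => ?_
    rw [Finset.sum_eq_single i]
    · rw [Matrix.diagonal_apply_eq]
    · intro i2 _ h
      rw [Matrix.diagonal_apply_ne _ (Ne.symm h), mul_zero, zero_mul, zero_mul]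
    · exact fun h => absurd (Finset.mem_univ i) h
  simp only [lhs1]
  rw [Finset.sum_comm]
  refine Finset.sum_congr rfl fun i _ => ?_
  have rhs1 : (∑ j, A i j) * ∑ k', (∑ k, ω (k, i) * H k k') ^ 2
      = ∑ k : Fin d, ∑ k2 : Fin d, (H * Hᵀ) k k2 * (∑ j, A i j) * ω (k, i) * ω (k2, i) := by
    have hsq : ∀ k' : Fin d', (∑ k, ω (k, i) * H k k') ^ 2
        = ∑ k, ∑ k2, ω (k, i) * H k k' * (ω (k2, i) * H k2 k') := by
      intro k'
      rw [sq, Finset.sum_mul]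
      exact Finset.sum_congr rfl fun k _ => Finset.mul_sum _ _ _
    simp only [hsq]
    simp only [Finset.mul_sum]
    rw [← sum_comm3 (f := fun k k2 k' =>
      (∑ j, A i j) * (ω (k, i) * H k k' * (ω (k2, i) * H k2 k')))]
    refine Finset.sum_congr rfl fun k _ => Finset.sum_congr rfl fun k2 _ => ?_
    simp only [Matrix.mul_apply, Matrix.transpose_apply, Finset.sum_mul, Finset.mul_sum]
    rw [Finset.sum_comm (s := Finset.univ) (t := Finset.univ)
      (f := fun (k' : Fin d') (j : Fin n') => A i j * (ω (k, i) * H k k' * (ω (k2, i) * H k2 k')))]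
    refine Finset.sum_congr rfl fun j _ => Finset.sum_congr rfl fun k' _ => by ring
  rw [rhs1]

lemma kronD (a : Fin n → ℝ) (ω : Fin d × Fin n → ℝ) :
    ∑ p : Fin d × Fin n, ∑ q : Fin d × Fin n,
        (1 : Matrix (Fin d) (Fin d) ℝ) p.1 q.1 * Matrix.diagonal a p.2 q.2 * ω p * ω q
      = ∑ i, a i * ∑ k, ω (k, i) ^ 2 := by
  rw [Fintype.sum_prod_type]
  have lhs1 : ∀ (k : Fin d) (i : Fin n),
      ∑ q : Fin d × Fin n, (1 : Matrix (Fin d) (Fin d) ℝ) k q.1 * Matrix.diagonal a i q.2 * ω (k, i) * ω q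
        = a i * ω (k, i) ^ 2 := by
    intro k i
    rw [Fintype.sum_prod_type]
    rw [Finset.sum_eq_single k]
    · rw [Finset.sum_eq_single i]
      · rw [Matrix.one_apply_eq, Matrix.diagonal_apply_eq]; ring
      · intro i2 _ h
        rw [Matrix.diagonal_apply_ne _ (Ne.symm h), mul_zero, zero_mul, zero_mul]
      · exact fun h => absurd (Finset.mem_univ i) h
    · intro k2 _ h
      refine Finset.sum_eq_zero fun i2 _ => ?_
      rw [Matrix.one_apply_ne (Ne.symm h), zero_mul, zero_mul, zero_mul]
    · exact fun h => absurd (Finset.mem_univ k) h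
  simp only [lhs1]
  rw [Finset.sum_comm]
  exact Finset.sum_congr rfl fun i _ => (Finset.mul_sum _ _ _).symm

lemma kronP (A : Matrix (Fin n) (Fin n') ℝ) (H : Matrix (Fin d) (Fin d') ℝ)
    (ω : Fin d × Fin n → ℝ) (ω' : Fin d' × Fin n' → ℝ) :
    ∑ p : Fin d × Fin n, ∑ q : Fin d' × Fin n', H p.1 q.1 * A p.2 q.2 * ω p * ω' q
      = ∑ i, ∑ j, A i j * ∑ k', (∑ k, ω (k, i) * H k k') * ω' (k', j) := by
  rw [Fintype.sum_prod_type, Finset.sum_comm]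
  refine Finset.sum_congr rfl fun i _ => ?_
  have rhs1 : ∀ j : Fin n', A i j * ∑ k', (∑ k, ω (k, i) * H k k') * ω' (k', j)
      = ∑ k' : Fin d', ∑ k : Fin d, H k k' * A i j * ω (k, i) * ω' (k', j) := by
    intro j
    rw [Finset.mul_sum]
    refine Finset.sum_congr rfl fun k' _ => ?_
    rw [Finset.sum_mul, Finset.mul_sum]
    refine Finset.sum_congr rfl fun k _ => by ring
  simp only [rhs1]
  have lhs1 : ∀ k : Fin d,
      ∑ q : Fin d' × Fin n', H k q.1 * A i q.2 * ω (k, i) * ω' q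
        = ∑ k' : Fin d', ∑ j : Fin n', H k k' * A i j * ω (k, i) * ω' (k', j) := by
    intro k
    rw [Fintype.sum_prod_type]
  simp only [lhs1]
  -- LHS: ∑ k ∑ k' ∑ j, RHS: ∑ j ∑ k' ∑ k
  rw [sum_comm3 (f := fun k k' j => H k k' * A i j * ω (k, i) * ω' (k', j))]
  refine Finset.sum_congr rfl fun j _ => Finset.sum_comm

lemma edge_expand (A : Matrix (Fin n) (Fin n') ℝ) (H : Matrix (Fin d) (Fin d') ℝ)
    (ω : Fin d × Fin n → ℝ) (ω' : Fin d' × Fin n' → ℝ) :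
    ∑ i, ∑ j, A i j * ∑ k', ((∑ k, ω (k, i) * H k k') - ω' (k', j)) ^ 2
      = (∑ i, (∑ j, A i j) * ∑ k', (∑ k, ω (k, i) * H k k') ^ 2)
        - 2 * (∑ i, ∑ j, A i j * ∑ k', (∑ k, ω (k, i) * H k k') * ω' (k', j))
        + ∑ j, (∑ i, A i j) * ∑ k', ω' (k', j) ^ 2 := by
  have step : ∀ (i : Fin n) (j : Fin n'),
      A i j * ∑ k', ((∑ k, ω (k, i) * H k k') - ω' (k', j)) ^ 2
        = A i j * ∑ k', (∑ k, ω (k, i) * H k k') ^ 2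
          - 2 * (A i j * ∑ k', (∑ k, ω (k, i) * H k k') * ω' (k', j))
          + A i j * ∑ k', ω' (k', j) ^ 2 := by
    intro i j
    have h1 : ∑ k', ((∑ k, ω (k, i) * H k k') - ω' (k', j)) ^ 2
        = ∑ k', ((∑ k, ω (k, i) * H k k') ^ 2 - 2 * ((∑ k, ω (k, i) * H k k') * ω' (k', j))
            + ω' (k', j) ^ 2) :=
      Finset.sum_congr rfl fun k' _ => by ring
    rw [h1, Finset.sum_add_distrib, Finset.sum_sub_distrib, ← Finset.mul_sum]
    ring
  simp only [step]
  simp only [Finset.sum_add_distrib, Finset.sum_sub_distrib]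
  congr 1
  · congr 1
    · exact Finset.sum_congr rfl fun i _ => (Finset.sum_mul _ _ _).symm
    · exact ((Finset.mul_sum _ _ _).trans
        (Finset.sum_congr rfl fun i _ => Finset.mul_sum _ _ _)).symm
  · rw [Finset.sum_comm]
    exact Finset.sum_congr rfl fun j _ => (Finset.sum_mul _ _ _).symm

end Generic


section HGLemmas

set_option linter.unusedSectionVars false

variable (hg : HeteroSetup)

lemma triple_reindex (f : ∀ s s' : hg.S, hg.T s s' → ℝ) :
    ∑ s, ∑ s', ∑ t : hg.T s s', f s s' t
      = ∑ s, ∑ s', ∑ t : hg.T s s', f s' s (hg.einv t) := by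
  have h1 : ∀ g : (∀ s s' : hg.S, hg.T s s' → ℝ),
      ∑ s, ∑ s', ∑ t : hg.T s s', g s s' t
        = ∑ x : Σ s : hg.S, Σ s' : hg.S, hg.T s s', g x.1 x.2.1 x.2.2 := by
    intro g
    rw [sum_sigma_fintype (m := fun s => Σ s' : hg.S, hg.T s s')
      (f := fun x => g x.1 x.2.1 x.2.2)]
    refine Finset.sum_congr rfl fun s _ => ?_
    rw [sum_sigma_fintype (f := fun p : Σ s' : hg.S, hg.T s s' => g s p.1 p.2)]
  rw [h1, h1]
  refine Fintype.sum_equiv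
    ⟨fun x => ⟨x.2.1, x.1, hg.einv x.2.2⟩, fun x => ⟨x.2.1, x.1, hg.einv x.2.2⟩,
      fun x => ?_, fun x => ?_⟩ _ _ (fun x => ?_)
  · rcases x with ⟨s, s', t⟩; simp [hg.einv_einv]
  · rcases x with ⟨s, s', t⟩; simp [hg.einv_einv]
  · rcases x with ⟨s, s', t⟩
    simp [hg.einv_einv]

lemma Pmat_symm (x y : hg.Idx) : hg.Pmat x y = hg.Pmat y x := by
  rcases x with ⟨s, k, i⟩
  rcases y with ⟨s', k', j⟩
  show (∑ t : hg.T s s', _) = ∑ t : hg.T s' s, _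
  refine Fintype.sum_equiv ⟨hg.einv, hg.einv, hg.einv_einv, hg.einv_einv⟩ _ _ fun t => ?_
  show (hg.H t + (hg.H (hg.einv t))ᵀ) k k' * hg.A t i j
      = (hg.H (hg.einv t) + (hg.H (hg.einv (hg.einv t)))ᵀ) k' k * hg.A (hg.einv t) j i
  rw [hg.einv_einv, hg.A_einv]
  simp only [Matrix.add_apply, Matrix.transpose_apply]
  ring

lemma Qmat_symm (x y : hg.Idx) : hg.Qmat x y = hg.Qmat y x := by
  refine bd_symm _ (fun s p q => ?_) x y
  simp only [Matrix.sum_apply, Matrix.kroneckerMap_apply]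
  refine Finset.sum_congr rfl fun s' _ => Finset.sum_congr rfl fun t _ => ?_
  have hH : (hg.H t * (hg.H t)ᵀ) p.1 q.1 = (hg.H t * (hg.H t)ᵀ) q.1 p.1 := by
    rw [Matrix.mul_apply, Matrix.mul_apply]
    exact Finset.sum_congr rfl fun c _ => by
      rw [Matrix.transpose_apply, Matrix.transpose_apply]; ring
  have hD : hg.Dst t p.2 q.2 = hg.Dst t q.2 p.2 := diag_symm _ _ _
  rw [hH, hD]

lemma Dblk_symm (x y : hg.Idx) : hg.Dblk x y = hg.Dblk y x := by
  refine bd_symm _ (fun s p q => ?_) x y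
  simp only [Matrix.kroneckerMap_apply]
  have h1 : (1 : Matrix (Fin (hg.d s)) (Fin (hg.d s)) ℝ) p.1 q.1
      = (1 : Matrix (Fin (hg.d s)) (Fin (hg.d s)) ℝ) q.1 p.1 := by
    by_cases h : p.1 = q.1
    · rw [h]
    · rw [Matrix.one_apply_ne h, Matrix.one_apply_ne (Ne.symm h)]
  have h2 : hg.Dtot s p.2 q.2 = hg.Dtot s q.2 p.2 := by
    show (∑ s', ∑ t : hg.T s s', hg.Dst t) p.2 q.2
        = (∑ s', ∑ t : hg.T s s', hg.Dst t) q.2 p.2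
    simp only [Matrix.sum_apply]
    exact Finset.sum_congr rfl fun s' _ => Finset.sum_congr rfl fun t _ => diag_symm _ _ _
  rw [h1, h2]

lemma Mmat_symm (x y : hg.Idx) :
    (hg.Qmat - hg.Pmat + hg.Dblk) x y = (hg.Qmat - hg.Pmat + hg.Dblk) y x := by
  simp only [Matrix.add_apply, Matrix.sub_apply]
  rw [Qmat_symm, Pmat_symm, Dblk_symm]

lemma mul_sum3 (c : ℝ) (f : ∀ s s' : hg.S, hg.T s s' → ℝ) :
    c * ∑ s, ∑ s', ∑ t : hg.T s s', f s s' t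
      = ∑ s, ∑ s', ∑ t : hg.T s s', c * f s s' t := by
  rw [Finset.mul_sum]
  exact Finset.sum_congr rfl fun s _ => (Finset.mul_sum _ _ _).trans
    (Finset.sum_congr rfl fun s' _ => Finset.mul_sum _ _ _)

lemma sumQ (w : hg.Idx → ℝ) :
    ∑ x : hg.Idx, ∑ y : hg.Idx, hg.Qmat x y * w x * w y
      = ∑ s, ∑ s', ∑ t : hg.T s s', ∑ i, (∑ j, hg.A t i j)
          * ∑ k', (∑ k, w ⟨s, (k, i)⟩ * hg.H t k k') ^ 2 := by
  rw [HeteroSetup.Qmat, sum_bd]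
  refine Finset.sum_congr rfl fun s _ => ?_
  have hblock : ∀ p q : Fin (hg.d s) × Fin (hg.n s),
      (∑ s', ∑ t : hg.T s s', (hg.H t * (hg.H t)ᵀ) ⊗ₖ hg.Dst t) p q
        = ∑ s', ∑ t : hg.T s s', ((hg.H t * (hg.H t)ᵀ) ⊗ₖ hg.Dst t) p q := by
    intro p q; simp [Matrix.sum_apply]
  simp only [hblock]
  rw [sum_mul_out]
  refine Finset.sum_congr rfl fun s' _ => ?_
  rw [sum_mul_out]
  refine Finset.sum_congr rfl fun t _ => ?_
  have := kronQ (hg.A t) (hg.H t) (fun pk => w ⟨s, pk⟩)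
  simpa [Matrix.kroneckerMap_apply, HeteroSetup.Dst] using this

lemma sumD (w : hg.Idx → ℝ) :
    ∑ x : hg.Idx, ∑ y : hg.Idx, hg.Dblk x y * w x * w y
      = ∑ s, ∑ s', ∑ t : hg.T s s', ∑ i, (∑ j, hg.A t i j) * ∑ k, w ⟨s, (k, i)⟩ ^ 2 := by
  rw [HeteroSetup.Dblk, sum_bd]
  refine Finset.sum_congr rfl fun s _ => ?_
  have hblock : ∀ p q : Fin (hg.d s) × Fin (hg.n s),
      ((1 : Matrix (Fin (hg.d s)) (Fin (hg.d s)) ℝ) ⊗ₖ hg.Dtot s) p q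
        = ∑ s', ∑ t : hg.T s s',
            (1 : Matrix (Fin (hg.d s)) (Fin (hg.d s)) ℝ) p.1 q.1 * hg.Dst t p.2 q.2 := by
    intro p q
    show (1 : Matrix (Fin (hg.d s)) (Fin (hg.d s)) ℝ) p.1 q.1
        * (∑ s', ∑ t : hg.T s s', hg.Dst t) p.2 q.2 = _
    simp only [Matrix.sum_apply, Finset.mul_sum]
  simp only [hblock]
  rw [sum_mul_out]
  refine Finset.sum_congr rfl fun s' _ => ?_
  rw [sum_mul_out]
  refine Finset.sum_congr rfl fun t _ => ?_
  have := kronD (fun i => ∑ j, hg.A t i j) (fun pk => w ⟨s, pk⟩)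
  simpa [HeteroSetup.Dst] using this

lemma sumP (w : hg.Idx → ℝ) :
    ∑ x : hg.Idx, ∑ y : hg.Idx, hg.Pmat x y * w x * w y
      = 2 * ∑ s, ∑ s', ∑ t : hg.T s s', ∑ i, ∑ j, hg.A t i j
          * ∑ k', (∑ k, w ⟨s, (k, i)⟩ * hg.H t k k') * w ⟨s', (k', j)⟩ := by
  have hL : ∑ x : hg.Idx, ∑ y : hg.Idx, hg.Pmat x y * w x * w y
      = ∑ s, ∑ s', ∑ p, ∑ q, hg.Pmat ⟨s, p⟩ ⟨s', q⟩ * w ⟨s, p⟩ * w ⟨s', q⟩ := by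
    rw [sum_sigma_fintype (f := fun x : hg.Idx => ∑ y : hg.Idx, hg.Pmat x y * w x * w y)]
    refine Finset.sum_congr rfl fun s _ => ?_
    have hin : ∀ p : Fin (hg.d s) × Fin (hg.n s),
        ∑ y : hg.Idx, hg.Pmat ⟨s, p⟩ y * w ⟨s, p⟩ * w y
          = ∑ s', ∑ q, hg.Pmat ⟨s, p⟩ ⟨s', q⟩ * w ⟨s, p⟩ * w ⟨s', q⟩ := fun p =>
      sum_sigma_fintype _
    simp only [hin]
    exact Finset.sum_comm
  rw [hL]
  have hP : ∀ (s s' : hg.S) (p : Fin (hg.d s) × Fin (hg.n s))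
      (q : Fin (hg.d s') × Fin (hg.n s')),
      hg.Pmat ⟨s, p⟩ ⟨s', q⟩
        = ∑ t : hg.T s s', (hg.H t p.1 q.1 + hg.H (hg.einv t) q.1 p.1) * hg.A t p.2 q.2 := by
    intro s s' p q
    refine Finset.sum_congr rfl fun t _ => ?_
    rw [Matrix.add_apply, Matrix.transpose_apply]
  simp only [hP]
  have hout : ∀ s s' : hg.S,
      ∑ p, ∑ q, (∑ t : hg.T s s', (hg.H t p.1 q.1 + hg.H (hg.einv t) q.1 p.1) * hg.A t p.2 q.2)
          * w ⟨s, p⟩ * w ⟨s', q⟩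
        = ∑ t : hg.T s s', ∑ p, ∑ q,
            ((hg.H t p.1 q.1 + hg.H (hg.einv t) q.1 p.1) * hg.A t p.2 q.2)
              * w ⟨s, p⟩ * w ⟨s', q⟩ := fun s s' => sum_mul_out _ _ _
  simp only [hout]
  have hsplit : ∀ (s s' : hg.S) (t : hg.T s s'),
      ∑ p, ∑ q, ((hg.H t p.1 q.1 + hg.H (hg.einv t) q.1 p.1) * hg.A t p.2 q.2)
          * w ⟨s, p⟩ * w ⟨s', q⟩
        = (∑ p, ∑ q, hg.H t p.1 q.1 * hg.A t p.2 q.2 * w ⟨s, p⟩ * w ⟨s', q⟩)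
          + ∑ p, ∑ q, hg.H (hg.einv t) q.1 p.1 * hg.A t p.2 q.2 * w ⟨s, p⟩ * w ⟨s', q⟩ := by
    intro s s' t
    rw [← Finset.sum_add_distrib]
    refine Finset.sum_congr rfl fun p _ => ?_
    rw [← Finset.sum_add_distrib]
    refine Finset.sum_congr rfl fun q _ => by ring
  simp only [hsplit]
  simp only [Finset.sum_add_distrib]
  have e2 : ∑ s, ∑ s', ∑ t : hg.T s s',
        ∑ p, ∑ q, hg.H (hg.einv t) q.1 p.1 * hg.A t p.2 q.2 * w ⟨s, p⟩ * w ⟨s', q⟩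
      = ∑ s, ∑ s', ∑ t : hg.T s s',
        ∑ p, ∑ q, hg.H t p.1 q.1 * hg.A t p.2 q.2 * w ⟨s, p⟩ * w ⟨s', q⟩ := by
    rw [triple_reindex hg (fun s s' t =>
      ∑ p, ∑ q, hg.H (hg.einv t) q.1 p.1 * hg.A t p.2 q.2 * w ⟨s, p⟩ * w ⟨s', q⟩)]
    refine Finset.sum_congr rfl fun s _ => Finset.sum_congr rfl fun s' _ =>
      Finset.sum_congr rfl fun t _ => ?_
    simp only [hg.einv_einv, hg.A_einv, Matrix.transpose_apply]
    rw [Finset.sum_comm]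
    refine Finset.sum_congr rfl fun p _ => Finset.sum_congr rfl fun q _ => by ring
  rw [e2]
  have eP : ∀ (s s' : hg.S) (t : hg.T s s'),
      ∑ p, ∑ q, hg.H t p.1 q.1 * hg.A t p.2 q.2 * w ⟨s, p⟩ * w ⟨s', q⟩
        = ∑ i, ∑ j, hg.A t i j * ∑ k', (∑ k, w ⟨s, (k, i)⟩ * hg.H t k k') * w ⟨s', (k', j)⟩ :=
    fun s s' t => kronP (hg.A t) (hg.H t) (fun pk => w ⟨s, pk⟩) (fun pk => w ⟨s', pk⟩)
  simp only [eP]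
  rw [two_mul]

lemma energy_eq (lam : ℝ) (B : hg.Emb) (w : EuclideanSpace ℝ hg.Idx) :
    hg.energy lam B (fun s => Matrix.of fun i k => w ⟨s, (k, i)⟩)
      = (1 / 2 : ℝ) * ∑ x, (w x - hg.vecOf B x) ^ 2
        + lam / 2 * ∑ x, ∑ y, (hg.Qmat - hg.Pmat + hg.Dblk) x y * w x * w y := by
  rw [HeteroSetup.energy, Finset.sum_add_distrib]
  congr 1
  · rw [sum_sigma_fintype (f := fun x : hg.Idx => (w x - hg.vecOf B x) ^ 2), Finset.mul_sum]
    refine Finset.sum_congr rfl fun s _ => ?_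
    congr 1
    rw [Fintype.sum_prod_type, Finset.sum_comm]
    rfl
  · have hMsplit : ∑ x : hg.Idx, ∑ y : hg.Idx, (hg.Qmat - hg.Pmat + hg.Dblk) x y * w x * w y
        = (∑ x : hg.Idx, ∑ y : hg.Idx, hg.Qmat x y * w x * w y)
          - (∑ x : hg.Idx, ∑ y : hg.Idx, hg.Pmat x y * w x * w y)
          + ∑ x : hg.Idx, ∑ y : hg.Idx, hg.Dblk x y * w x * w y := by
      simp only [Matrix.add_apply, Matrix.sub_apply, sub_mul, add_mul,
        Finset.sum_add_distrib, Finset.sum_sub_distrib]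
    rw [← Finset.mul_sum, hMsplit, sumQ, sumP, sumD]
    congr 1
    have hD2 : ∑ s, ∑ s', ∑ t : hg.T s s', ∑ i, (∑ j, hg.A t i j) * ∑ k, w ⟨s, (k, i)⟩ ^ 2
        = ∑ s, ∑ s', ∑ t : hg.T s s',
            ∑ j, (∑ i, hg.A t i j) * ∑ k', w ⟨s', (k', j)⟩ ^ 2 := by
      rw [triple_reindex hg (fun s s' t => ∑ i, (∑ j, hg.A t i j) * ∑ k, w ⟨s, (k, i)⟩ ^ 2)]
      refine Finset.sum_congr rfl fun s _ => Finset.sum_congr rfl fun s' _ =>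
        Finset.sum_congr rfl fun t _ => ?_
      simp only [hg.A_einv, Matrix.transpose_apply]
    rw [hD2]
    have hE : ∀ s : hg.S,
        ∑ s', ∑ t : hg.T s s', ∑ i, ∑ j, hg.A t i j
            * ∑ k', (((Matrix.of fun i k => w ⟨s, (k, i)⟩) i ᵥ* hg.H t) k'
                - (Matrix.of fun i k => w ⟨s', (k, i)⟩) j k') ^ 2
          = ∑ s', ∑ t : hg.T s s',
            ((∑ i, (∑ j, hg.A t i j) * ∑ k', (∑ k, w ⟨s, (k, i)⟩ * hg.H t k k') ^ 2)
              - 2 * (∑ i, ∑ j, hg.A t i j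
                  * ∑ k', (∑ k, w ⟨s, (k, i)⟩ * hg.H t k k') * w ⟨s', (k', j)⟩)
              + ∑ j, (∑ i, hg.A t i j) * ∑ k', w ⟨s', (k', j)⟩ ^ 2) := by
      intro s
      refine Finset.sum_congr rfl fun s' _ => Finset.sum_congr rfl fun t _ => ?_
      have := edge_expand (hg.A t) (hg.H t) (fun pk => w ⟨s, pk⟩) (fun pk => w ⟨s', pk⟩)
      rw [← this]
      refine Finset.sum_congr rfl fun i _ => Finset.sum_congr rfl fun j _ => ?_
      congr 1
    simp only [hE]
    simp only [Finset.sum_add_distrib, Finset.sum_sub_distrib]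
    rw [← mul_sum3 hg 2 (fun s s' t => ∑ i, ∑ j, hg.A t i j
      * ∑ k', (∑ k, w ⟨s, (k, i)⟩ * hg.H t k k') * w ⟨s', (k', j)⟩)]

end HGLemmas

open Matrix HeteroSetup

/-- In the heterogeneous setup with λ > 0, the stacked vectorized
gradient of the heterogeneous energy satisfies, for every `Y`,
`vec(∇ℓ(Y)) = vec(Y) − vec(B) + λ (Q − P + D_blk) vec(Y)`.
The gradient of ℓ, viewed through the vectorization as a function on the Euclidean space
indexed by `Idx` (whose inner product is the stacked Frobenius inner product), is
expressed via `HasGradientAt`. -/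
theorem stmt2 (hg : HeteroSetup) (lam : ℝ) (hlam : 0 < lam) (B : hg.Emb) (Y : hg.Emb) :
    HasGradientAt
      (fun v : EuclideanSpace ℝ hg.Idx =>
        hg.energy lam B (fun s => Matrix.of fun i k => v ⟨s, (k, i)⟩))
      ((WithLp.equiv 2 _).symm
        (hg.vecOf Y - hg.vecOf B + lam • ((hg.Qmat - hg.Pmat + hg.Dblk) *ᵥ hg.vecOf Y)))
      ((WithLp.equiv 2 _).symm (hg.vecOf Y)) := by
  have hM : ∀ x y, (hg.Qmat - hg.Pmat + hg.Dblk) x y = (hg.Qmat - hg.Pmat + hg.Dblk) y x :=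
    Mmat_symm hg
  have hfun : (fun v : EuclideanSpace ℝ hg.Idx =>
      hg.energy lam B (fun s => Matrix.of fun i k => v ⟨s, (k, i)⟩))
      = fun w : EuclideanSpace ℝ hg.Idx =>
        (1 / 2 : ℝ) * ∑ x, (w x - hg.vecOf B x) ^ 2
          + lam / 2 * ∑ x, ∑ y, (hg.Qmat - hg.Pmat + hg.Dblk) x y * w x * w y :=
    funext fun w => energy_eq hg lam B w
  rw [hfun]
  exact quad_grad lam (hg.vecOf B) (hg.vecOf Y) _ hM
end

section
/- Let n ≥ 1, λ > 0, let D ∈ ℝ^{n×n} be a diagonal matrix with nonnegative diagonal entries whose minimum diagonal entry is d_min, and let S ∈ ℝ^{n×n} be symmetric with largest eigenvalue σ_max ≥ 0 such that S + D is positive semidefinite. Fix b ∈ ℝⁿ and define f(y) = (1/2) yᵀ (I + λ(S + D)) y − bᵀ y. For any initialization y^{(0)} ∈ ℝⁿ, define y^{(k+1)} = y^{(k)} − α (I + λD)^{-1} ((I + λ(S + D)) y^{(k)} − b). If 0 < α < (2 + 2λ d_min) / (1 + λ(d_min + σ_max)), then f(y^{(k+1)}) ≤ f(y^{(k)}) for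 all k, and y^{(k)} converges as k → ∞ to (I + λ(S + D))^{-1} b, the unique global minimizer of f. -/
open Matrix Filter

lemma aux_spec {n : ℕ} (S : Matrix (Fin n) (Fin n) ℝ) (hS : Sᵀ = S) (σmax : ℝ)
    (hσ : IsGreatest {μ : ℝ | ∃ v : Fin n → ℝ, v ≠ 0 ∧ S *ᵥ v = μ • v} σmax) :
    ∀ v : Fin n → ℝ, v ⬝ᵥ (S *ᵥ v) ≤ σmax * (v ⬝ᵥ v) := by
  classical
  have hSh : S.IsHermitian := by
    unfold Matrix.IsHermitian
    rw [Matrix.conjTranspose_eq_transpose_of_trivial, hS]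
  set B : Matrix (Fin n) (Fin n) ℝ := σmax • (1 : Matrix (Fin n) (Fin n) ℝ) - S with hBdef
  have hBh : B.IsHermitian := by
    unfold Matrix.IsHermitian
    rw [Matrix.conjTranspose_eq_transpose_of_trivial, hBdef, Matrix.transpose_sub,
      Matrix.transpose_smul, Matrix.transpose_one, hS]
  have hBpsd : B.PosSemidef := by
    rw [hBh.posSemidef_iff_eigenvalues_nonneg, Pi.le_def]; simp only [Pi.zero_apply]
    intro i
    set μ := hBh.eigenvalues i with hμ
    set v : Fin n → ℝ := ⇑(hBh.eigenvectorBasis i) with hv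
    have hv0 : v ≠ 0 := by
      have := hBh.eigenvectorBasis.orthonormal.ne_zero i
      intro h
      apply this
      ext j
      exact congrFun h j
    have heig : B *ᵥ v = μ • v := hBh.mulVec_eigenvectorBasis i
    have hSv : S *ᵥ v = (σmax - μ) • v := by
      have h1 : B *ᵥ v = σmax • v - S *ᵥ v := by
        simp [hBdef, Matrix.sub_mulVec, Matrix.smul_mulVec]
      rw [h1] at heig
      have : S *ᵥ v = σmax • v - μ • v := by
        rw [eq_sub_iff_add_eq, ← heig]; abel
      rw [this, ← sub_smul]
    have := hσ.2 ⟨v, hv0, hSv⟩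
    linarith
  intro v
  have h := hBpsd.dotProduct_mulVec_nonneg v
  simp only [star_trivial] at h
  have hBv : B *ᵥ v = σmax • v - S *ᵥ v := by
    simp [hBdef, Matrix.sub_mulVec, Matrix.smul_mulVec]
  rw [hBv, dotProduct_sub, dotProduct_smul, smul_eq_mul] at h
  linarith

set_option maxHeartbeats 1000000 in
/-- Let n ≥ 1, λ > 0, D ∈ ℝ^{n×n} diagonal with nonnegative diagonal
entries whose minimum diagonal entry is d_min, and S ∈ ℝ^{n×n} symmetric with largest
eigenvalue σ_max ≥ 0 such that S + D is positive semidefinite.  Fix b ∈ ℝⁿ and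
f(y) = (1/2) yᵀ (I + λ(S + D)) y − bᵀ y.  For any initialization y⁽⁰⁾, define
y⁽ᵏ⁺¹⁾ = y⁽ᵏ⁾ − α (I + λD)⁻¹ ((I + λ(S + D)) y⁽ᵏ⁾ − b).
If 0 < α < (2 + 2λ d_min) / (1 + λ(d_min + σ_max)), then f(y⁽ᵏ⁺¹⁾) ≤ f(y⁽ᵏ⁾) for all k,
and y⁽ᵏ⁾ converges to (I + λ(S + D))⁻¹ b, the unique global minimizer of f. -/
theorem stmt5 (n : ℕ) (hn : 1 ≤ n) (lam : ℝ) (hlam : 0 < lam)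
    (D S : Matrix (Fin n) (Fin n) ℝ)
    (hDdiag : ∀ i j, i ≠ j → D i j = 0) (hDnonneg : ∀ i, 0 ≤ D i i)
    (dmin : ℝ) (hdmin : IsLeast (Set.range fun i => D i i) dmin)
    (hS : Sᵀ = S) (σmax : ℝ) (hσ0 : 0 ≤ σmax)
    (hσ : IsGreatest {μ : ℝ | ∃ v : Fin n → ℝ, v ≠ 0 ∧ S *ᵥ v = μ • v} σmax)
    (hSD : (S + D).PosSemidef)
    (b : Fin n → ℝ) (f : (Fin n → ℝ) → ℝ)
    (hf : ∀ y, f y = (1 / 2 : ℝ) * (y ⬝ᵥ ((1 + lam • (S + D)) *ᵥ y)) - b ⬝ᵥ y)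
    (α : ℝ) (hα0 : 0 < α)
    (hα : α < (2 + 2 * lam * dmin) / (1 + lam * (dmin + σmax)))
    (y : ℕ → (Fin n → ℝ))
    (hrec : ∀ k, y (k + 1) = y k - α • ((1 + lam • D)⁻¹ *ᵥ ((1 + lam • (S + D)) *ᵥ y k - b))) :
    (∀ k, f (y (k + 1)) ≤ f (y k)) ∧
    Tendsto y atTop (nhds ((1 + lam • (S + D))⁻¹ *ᵥ b)) ∧
    (∀ z, f ((1 + lam • (S + D))⁻¹ *ᵥ b) ≤ f z) ∧
    (∀ z, (∀ w, f z ≤ f w) → z = (1 + lam • (S + D))⁻¹ *ᵥ b) := by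
  classical
  haveI : NeZero n := ⟨by omega⟩
  set A : Matrix (Fin n) (Fin n) ℝ := 1 + lam • (S + D) with hAdef
  set M : Matrix (Fin n) (Fin n) ℝ := 1 + lam • D with hMdef
  -- basic scalar facts
  obtain ⟨i0, hi0⟩ := hdmin.1
  have hdle : ∀ i, dmin ≤ D i i := fun i => hdmin.2 ⟨i, rfl⟩
  have hd0 : 0 ≤ dmin := hi0 ▸ hDnonneg i0
  set dmax : ℝ := Finset.univ.sup' Finset.univ_nonempty (fun i => D i i) with hdmaxdef
  have hdmaxle : ∀ i, D i i ≤ dmax := by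
    intro i
    rw [hdmaxdef]
    exact Finset.le_sup' (fun j => D j j) (Finset.mem_univ i)
  have hdminmax : dmin ≤ dmax := hi0 ▸ hdmaxle i0
  have hpd : (0:ℝ) < 1 + lam * dmin := by nlinarith
  have hpx : (0:ℝ) < 1 + lam * dmax := by nlinarith
  have hden : (0:ℝ) < 1 + lam * (dmin + σmax) := by nlinarith
  set c : ℝ := (1 + lam * (dmin + σmax)) / (1 + lam * dmin) with hcdef
  have hc1 : 1 ≤ c := by
    rw [hcdef, le_div_iff₀ hpd]; nlinarith
  have hcmul : c * (1 + lam * dmin) = 1 + lam * (dmin + σmax) := by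
    rw [hcdef, div_mul_cancel₀ _ hpd.ne']
  have hαc : α * c < 2 := by
    rw [lt_div_iff₀ hden] at hα
    rw [hcdef]
    rw [mul_div_assoc', div_lt_iff₀ hpd]
    nlinarith
  -- symmetry facts
  have hDsymm : Dᵀ = D := by
    ext i j
    by_cases h : i = j
    · rw [h]; rfl
    · rw [Matrix.transpose_apply, hDdiag i j h, hDdiag j i (fun hh => h hh.symm)]
  have hAs : Aᵀ = A := by
    rw [hAdef, Matrix.transpose_add, Matrix.transpose_one, Matrix.transpose_smul,
      Matrix.transpose_add, hS, hDsymm]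
  have hswap : ∀ (P : Matrix (Fin n) (Fin n) ℝ), Pᵀ = P →
      ∀ v w : Fin n → ℝ, v ⬝ᵥ (P *ᵥ w) = (P *ᵥ v) ⬝ᵥ w := by
    intro P hP v w
    rw [Matrix.dotProduct_mulVec, ← Matrix.mulVec_transpose, hP]
  have hspec := aux_spec S hS σmax hσ
  have hSDq : ∀ v : Fin n → ℝ, 0 ≤ v ⬝ᵥ ((S + D) *ᵥ v) := by
    intro v; simpa using hSD.dotProduct_mulVec_nonneg v
  have hself : ∀ v : Fin n → ℝ, 0 ≤ v ⬝ᵥ v := fun v =>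
    Finset.sum_nonneg fun i _ => mul_self_nonneg (v i)
  -- quadratic form V
  set V : (Fin n → ℝ) → ℝ := fun e => e ⬝ᵥ (A *ᵥ e) with hVdef
  have hAe : ∀ e : Fin n → ℝ, A *ᵥ e = e + lam • ((S + D) *ᵥ e) := by
    intro e
    rw [hAdef, Matrix.add_mulVec, Matrix.one_mulVec, Matrix.smul_mulVec]
  have hVe : ∀ e : Fin n → ℝ, e ⬝ᵥ e ≤ V e := by
    intro e
    rw [hVdef]
    simp only [hAe, dotProduct_add, dotProduct_smul, smul_eq_mul]
    nlinarith [hSDq e]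
  have hV0 : ∀ e, 0 ≤ V e := fun e => le_trans (hself e) (hVe e)
  -- diagonal structure of M
  have hDdiagonal : D = Matrix.diagonal (fun i => D i i) := by
    ext i j
    by_cases h : i = j
    · rw [h]; simp
    · rw [Matrix.diagonal_apply_ne _ h, hDdiag i j h]
  have hMd : ∀ u : Fin n → ℝ, M *ᵥ u = fun i => (1 + lam * D i i) * u i := by
    intro u
    ext i
    rw [hMdef, Matrix.add_mulVec, Matrix.one_mulVec, Matrix.smul_mulVec]
    rw [hDdiagonal]
    simp only [Pi.add_apply, Pi.smul_apply, Matrix.mulVec_diagonal, smul_eq_mul,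
      Matrix.diagonal_apply_eq]
    ring
  have hMdet : IsUnit M.det := by
    have : M = Matrix.diagonal (fun i => 1 + lam * D i i) := by
      ext i j
      by_cases h : i = j
      · subst h
        rw [Matrix.diagonal_apply_eq]
        simp [hMdef, Matrix.add_apply, Matrix.one_apply_eq, Matrix.smul_apply, smul_eq_mul]
      · simp [hMdef, Matrix.one_apply_ne h, Matrix.diagonal_apply_ne _ h, hDdiag i j h]
    rw [this, Matrix.det_diagonal]
    apply IsUnit.mk0
    apply Finset.prod_ne_zero_iff.mpr
    intro i _
    nlinarith [hDnonneg i, hdle i]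
  have hMM : ∀ g : Fin n → ℝ, M *ᵥ (M⁻¹ *ᵥ g) = g := by
    intro g
    rw [Matrix.mulVec_mulVec, Matrix.mul_nonsing_inv _ hMdet, Matrix.one_mulVec]
  -- A invertible
  have hApd : A.PosDef := by
    rw [Matrix.posDef_iff_dotProduct_mulVec]; constructor
    · unfold Matrix.IsHermitian
      rw [Matrix.conjTranspose_eq_transpose_of_trivial, hAs]
    · intro x hx
      simp only [star_trivial]
      have h1 : 0 < x ⬝ᵥ x := by
        rcases lt_or_eq_of_le (hself x) with h|h
        · exact h
        · exact absurd (dotProduct_self_eq_zero.mp h.symm) hx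
      calc (0:ℝ) < x ⬝ᵥ x := h1
        _ ≤ V x := hVe x
  have hAdet : IsUnit A.det := hApd.det_pos.ne'.isUnit
  set xstar : Fin n → ℝ := A⁻¹ *ᵥ b with hxdef
  have hAx : A *ᵥ xstar = b := by
    rw [hxdef, Matrix.mulVec_mulVec, Matrix.mul_nonsing_inv _ hAdet, Matrix.one_mulVec]
  -- quadratic bounds
  have hQlow : ∀ u : Fin n → ℝ, (1 + lam * dmin) * (u ⬝ᵥ u) ≤ u ⬝ᵥ (M *ᵥ u) := by
    intro u
    rw [hMd u]
    unfold dotProduct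
    rw [Finset.mul_sum]
    apply Finset.sum_le_sum
    intro i _
    have h : 1 + lam * dmin ≤ 1 + lam * D i i := by nlinarith [hdle i]
    calc (1 + lam * dmin) * (u i * u i) ≤ (1 + lam * D i i) * (u i * u i) :=
          mul_le_mul_of_nonneg_right h (mul_self_nonneg _)
      _ = u i * ((fun i => (1 + lam * D i i) * u i) i) := by ring
  have hMnorm : ∀ u : Fin n → ℝ, (M *ᵥ u) ⬝ᵥ (M *ᵥ u) ≤ (1 + lam * dmax)^2 * (u ⬝ᵥ u) := by
    intro u
    rw [hMd u]
    unfold dotProduct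
    rw [Finset.mul_sum]
    apply Finset.sum_le_sum
    intro i _
    have h1 : 0 ≤ 1 + lam * D i i := by nlinarith [hDnonneg i]
    have h2 : 1 + lam * D i i ≤ 1 + lam * dmax := by nlinarith [hdmaxle i]
    have h3 : (1 + lam * D i i) * (1 + lam * D i i) ≤ (1 + lam * dmax)^2 := by
      nlinarith
    calc (fun i => (1 + lam * D i i) * u i) i * (fun i => (1 + lam * D i i) * u i) i
        = ((1 + lam * D i i) * (1 + lam * D i i)) * (u i * u i) := by ring
      _ ≤ (1 + lam * dmax)^2 * (u i * u i) :=
          mul_le_mul_of_nonneg_right h3 (mul_self_nonneg _)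
  have hPQ : ∀ u : Fin n → ℝ, u ⬝ᵥ (A *ᵥ u) ≤ c * (u ⬝ᵥ (M *ᵥ u)) := by
    intro u
    have hAM : A = M + lam • S := by
      rw [hAdef, hMdef, smul_add]; abel
    have h1 : u ⬝ᵥ (A *ᵥ u) = u ⬝ᵥ (M *ᵥ u) + lam * (u ⬝ᵥ (S *ᵥ u)) := by
      rw [hAM, Matrix.add_mulVec, dotProduct_add, Matrix.smul_mulVec,
        dotProduct_smul, smul_eq_mul]
    have h2 : u ⬝ᵥ (S *ᵥ u) ≤ σmax * (u ⬝ᵥ u) := hspec u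
    have h3 := hQlow u
    nlinarith [hself u, mul_le_mul_of_nonneg_left h3 (mul_nonneg hlam.le hσ0),
      mul_le_mul_of_nonneg_left h2 hlam.le]
  -- error sequence
  set e : ℕ → (Fin n → ℝ) := fun k => y k - xstar with hedef
  set u : ℕ → (Fin n → ℝ) := fun k => M⁻¹ *ᵥ (A *ᵥ e k) with hudef
  have hgrad : ∀ k, A *ᵥ y k - b = A *ᵥ e k := by
    intro k
    rw [hedef]
    simp only
    rw [Matrix.mulVec_sub, hAx]
  have hek : ∀ k, e (k + 1) = e k - α • u k := by
    intro k
    rw [hedef]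
    simp only
    rw [hrec k, hgrad k]
    abel
  -- expansion
  have hexp : ∀ v w : Fin n → ℝ, (v - α • w) ⬝ᵥ (A *ᵥ (v - α • w)) =
      v ⬝ᵥ (A *ᵥ v) - 2*α*((A *ᵥ v) ⬝ᵥ w) + α^2 * (w ⬝ᵥ (A *ᵥ w)) := by
    intro v w
    rw [Matrix.mulVec_sub, Matrix.mulVec_smul]
    rw [sub_dotProduct, dotProduct_sub, dotProduct_sub, smul_dotProduct,
      dotProduct_smul, dotProduct_smul, smul_dotProduct]
    simp only [smul_eq_mul]
    rw [hswap A hAs v w, dotProduct_comm w (A *ᵥ v)]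
    ring
  have hstep : ∀ k, V (e (k+1)) = V (e k) - 2*α*(u k ⬝ᵥ (M *ᵥ u k))
      + α^2 * (u k ⬝ᵥ (A *ᵥ u k)) := by
    intro k
    rw [hVdef]
    simp only
    rw [hek k, hexp (e k) (u k)]
    have : A *ᵥ e k = M *ᵥ u k := (hMM (A *ᵥ e k)).symm
    rw [this, dotProduct_comm (M *ᵥ u k) (u k)]
  have hQpos : ∀ k, 0 ≤ u k ⬝ᵥ (M *ᵥ u k) := by
    intro k
    calc (0:ℝ) ≤ (1 + lam * dmin) * (u k ⬝ᵥ u k) := mul_nonneg hpd.le (hself _)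
      _ ≤ _ := hQlow _
  have hdecr : ∀ k, V (e (k+1)) ≤ V (e k) - α*(2 - α*c)*(u k ⬝ᵥ (M *ᵥ u k)) := by
    intro k
    rw [hstep k]
    have := hPQ (u k)
    nlinarith [hQpos k, mul_le_mul_of_nonneg_left (hPQ (u k)) (sq_nonneg α)]
  -- f in terms of V
  have hF : ∀ z, f z = (1/2) * V (z - xstar) + f xstar := by
    intro z
    rw [hf z, hf xstar, hVdef]
    simp only
    have hz : z = (z - xstar) + xstar := by abel
    set w := z - xstar with hw
    calc (1/2 : ℝ) * (z ⬝ᵥ (A *ᵥ z)) - b ⬝ᵥ z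
        = (1/2) * ((w + xstar) ⬝ᵥ (A *ᵥ (w + xstar))) - b ⬝ᵥ (w + xstar) := by rw [← hz]
      _ = (1/2) * (w ⬝ᵥ (A *ᵥ w)) + ((1/2) * (xstar ⬝ᵥ (A *ᵥ xstar)) - b ⬝ᵥ xstar) := by
          simp only [Matrix.mulVec_add, dotProduct_add, add_dotProduct]
          rw [hswap A hAs xstar w, hAx, dotProduct_comm w b]
          ring
  -- claim 1 : f decreases
  have claim1 : ∀ k, f (y (k + 1)) ≤ f (y k) := by
    intro k
    rw [hF (y (k+1)), hF (y k)]
    have h1 : V (y (k+1) - xstar) = V (e (k+1)) := rfl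
    have h2 : V (y k - xstar) = V (e k) := rfl
    rw [h1, h2]
    have h3 := hdecr k
    have h4 : 0 ≤ α*(2 - α*c)*(u k ⬝ᵥ (M *ᵥ u k)) := by
      apply mul_nonneg (mul_nonneg hα0.le (by linarith)) (hQpos k)
    linarith
  -- contraction constants
  set κ : ℝ := (1 + lam * dmin) / ((1 + lam * dmax)^2) with hκdef
  have hκ0 : 0 < κ := div_pos hpd (by positivity)
  set ρ : ℝ := α * (2 - α*c) * κ with hρdef
  have hρ0 : 0 < ρ := by
    apply mul_pos (mul_pos hα0 (by linarith)) hκ0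
  -- Q ≥ κ V
  have hQV : ∀ k, κ * V (e k) ≤ u k ⬝ᵥ (M *ᵥ u k) := by
    intro k
    set g : Fin n → ℝ := A *ᵥ e k with hgdef
    have hMu : M *ᵥ u k = g := hMM g
    -- V (e k) ≤ g ⬝ᵥ g
    have hVg : V (e k) ≤ g ⬝ᵥ g := by
      have hcs : (e k ⬝ᵥ g)^2 ≤ (e k ⬝ᵥ e k) * (g ⬝ᵥ g) := by
        have := Finset.sum_mul_sq_le_sq_mul_sq Finset.univ (e k) g
        calc (e k ⬝ᵥ g)^2 = (∑ i, e k i * g i)^2 := rfl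
          _ ≤ (∑ i, (e k i)^2) * (∑ i, (g i)^2) := this
          _ = (e k ⬝ᵥ e k) * (g ⬝ᵥ g) := by
              unfold dotProduct; congr 1 <;> (apply Finset.sum_congr rfl; intro i _; ring)
      have hVeq : V (e k) = e k ⬝ᵥ g := rfl
      rcases eq_or_lt_of_le (hV0 (e k)) with h|h
      · rw [← h]; exact hself g
      · have h1 : V (e k) * V (e k) ≤ V (e k) * (g ⬝ᵥ g) := by
          calc V (e k) * V (e k) = (e k ⬝ᵥ g)^2 := by rw [hVeq]; ring
            _ ≤ (e k ⬝ᵥ e k) * (g ⬝ᵥ g) := hcs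
            _ ≤ V (e k) * (g ⬝ᵥ g) := by
                apply mul_le_mul_of_nonneg_right (hVe (e k)) (hself g)
        exact le_of_mul_le_mul_left h1 h
    -- g ⬝ᵥ g ≤ (1+lam*dmax)^2 * (u k ⬝ᵥ u k)
    have hgu : g ⬝ᵥ g ≤ (1 + lam * dmax)^2 * (u k ⬝ᵥ u k) := by
      rw [← hMu]; exact hMnorm (u k)
    have h3 := hQlow (u k)
    rw [hκdef]
    rw [div_mul_eq_mul_div, div_le_iff₀ (by positivity)]
    calc (1 + lam * dmin) * V (e k) ≤ (1 + lam * dmin) * ((1 + lam * dmax)^2 * (u k ⬝ᵥ u k)) := by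
          apply mul_le_mul_of_nonneg_left (le_trans hVg hgu) hpd.le
      _ = ((1 + lam * dmin) * (u k ⬝ᵥ u k)) * (1 + lam * dmax)^2 := by ring
      _ ≤ (u k ⬝ᵥ (M *ᵥ u k)) * (1 + lam * dmax)^2 := by
          apply mul_le_mul_of_nonneg_right h3 (by positivity)
  set r : ℝ := max (1 - ρ) 0 with hrdef
  have hr0 : 0 ≤ r := le_max_right _ _
  have hr1 : r < 1 := max_lt (by linarith) one_pos
  have hcontract : ∀ k, V (e (k+1)) ≤ r * V (e k) := by
    intro k
    have h1 := hdecr k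
    have h2 : α*(2 - α*c)*(κ * V (e k)) ≤ α*(2 - α*c)*(u k ⬝ᵥ (M *ᵥ u k)) := by
      apply mul_le_mul_of_nonneg_left (hQV k) (mul_nonneg hα0.le (by linarith))
    have h3 : V (e (k+1)) ≤ (1 - ρ) * V (e k) := by
      rw [hρdef]; nlinarith
    calc V (e (k+1)) ≤ (1 - ρ) * V (e k) := h3
      _ ≤ r * V (e k) := mul_le_mul_of_nonneg_right (le_max_left _ _) (hV0 (e k))
  have hVk : ∀ k, V (e k) ≤ r^k * V (e 0) := by
    intro k
    induction k with
    | zero => simp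
    | succ k ih =>
      calc V (e (k+1)) ≤ r * V (e k) := hcontract k
        _ ≤ r * (r^k * V (e 0)) := mul_le_mul_of_nonneg_left ih hr0
        _ = r^(k+1) * V (e 0) := by ring
  -- convergence
  have claim2 : Tendsto y atTop (nhds xstar) := by
    rw [tendsto_pi_nhds]
    intro i
    have hbound : ∀ k, (y k i - xstar i)^2 ≤ r^k * V (e 0) := by
      intro k
      have h1 : (y k i - xstar i)^2 = (e k i)^2 := rfl
      have h2 : (e k i)^2 ≤ e k ⬝ᵥ e k := by
        unfold dotProduct
        have : (e k i)^2 = e k i * e k i := sq (e k i) ▸ by ring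
        rw [this]
        exact Finset.single_le_sum (fun j _ => mul_self_nonneg (e k j)) (Finset.mem_univ i)
      calc (y k i - xstar i)^2 = (e k i)^2 := h1
        _ ≤ e k ⬝ᵥ e k := h2
        _ ≤ V (e k) := hVe (e k)
        _ ≤ r^k * V (e 0) := hVk k
    have hlim : Tendsto (fun k => r^k * V (e 0)) atTop (nhds 0) := by
      have := (tendsto_pow_atTop_nhds_zero_of_lt_one hr0 hr1).mul_const (V (e 0))
      simpa using this
    have hsq : Tendsto (fun k => (y k i - xstar i)^2) atTop (nhds 0) :=
      squeeze_zero (fun k => sq_nonneg _) hbound hlim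
    have habs : Tendsto (fun k => |y k i - xstar i|) atTop (nhds 0) := by
      have h := (Real.continuous_sqrt.tendsto 0).comp hsq
      simp only [Function.comp_def] at h
      rw [Real.sqrt_zero] at h
      convert h using 2 with k
      · exact (Real.sqrt_sq_eq_abs _).symm
    have hdiff : Tendsto (fun k => y k i - xstar i) atTop (nhds 0) := by
      have hneg : Tendsto (fun k => -|y k i - xstar i|) atTop (nhds 0) := by
        simpa using habs.neg
      exact tendsto_of_tendsto_of_tendsto_of_le_of_le hneg habs
        (fun k => neg_abs_le _) (fun k => le_abs_self _)
    have := hdiff.add_const (xstar i)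
    simpa using this
  -- claims 3 and 4
  have claim3 : ∀ z, f xstar ≤ f z := by
    intro z
    rw [hF z]
    have := hV0 (z - xstar)
    linarith
  have claim4 : ∀ z, (∀ w, f z ≤ f w) → z = xstar := by
    intro z hz
    have h1 := hz xstar
    rw [hF z] at h1
    have h2 : V (z - xstar) ≤ 0 := by linarith
    have h3 : (z - xstar) ⬝ᵥ (z - xstar) = 0 :=
      le_antisymm (le_trans (hVe _) h2) (hself _)
    have h4 : z - xstar = 0 := dotProduct_self_eq_zero.mp h3
    rwa [sub_eq_zero] at h4
  exact ⟨claim1, claim2, claim3, claim4⟩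
end
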